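/- arXiv:1708.06437 — 4 statements merged into one kernel-verified Lean document; each statement's English description precedes it below -/
import Mathlib

section
/- Let R and S be independent exponentially distributed random variables with means m_R > 0 and m_S > 0. Then E[ ln(1 + R·S/(S + 1)) ] ≥ ln( 1 + m_R·m_S·exp(−2γ)·exp( −exp(1/m_S)·∫_{1/m_S}^∞ (exp(−t)/t) dt ) ), where γ is the Euler–Mascheroni constant. (The inner exponent equals exp(1/m_S)·Ei(−1/m_S), where Ei is the exponential integral.) -/
open MeasureTheory ProbabilityTheory Real

open MeasureTheory ProbabilityTheory Real Set Filter Topology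
open scoped NNReal ENNReal

set_option maxHeartbeats 1000000

namespace SecrecyAux

noncomputable def eiTail (x : ℝ) : ℝ := ∫ t in Ioi x, Real.exp (-t) / t

lemma integrableOn_exp_div {x : ℝ} (hx : 0 < x) :
    IntegrableOn (fun t => rexp (-t) / t) (Ioi x) := by
  have h : IntegrableOn (fun t => rexp (-t) * x⁻¹) (Ioi x) := by
    have := (exp_neg_integrableOn_Ioi x one_pos).mul_const x⁻¹
    simpa [IntegrableOn] using this
  refine h.mono' ?_ ?_
  · exact ((Real.measurable_exp.comp measurable_neg).div measurable_id).aestronglyMeasurable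
  · rw [ae_restrict_iff' measurableSet_Ioi]
    filter_upwards with t ht
    have htx : x < t := ht
    have ht0 : 0 < t := hx.trans htx
    rw [Real.norm_eq_abs, abs_of_nonneg (by positivity), div_eq_mul_inv]
    have : t⁻¹ ≤ x⁻¹ := by
      rw [inv_le_inv₀ ht0 hx]
      exact htx.le
    exact mul_le_mul_of_nonneg_left this (Real.exp_pos _).le

lemma eiTail_nonneg {x : ℝ} (hx : 0 < x) : 0 ≤ eiTail x :=
  setIntegral_nonneg measurableSet_Ioi fun t ht =>
    div_nonneg (Real.exp_pos _).le (hx.trans ht).le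

lemma eiTail_le {x : ℝ} (hx : 1 ≤ x) : eiTail x ≤ rexp (-x) := by
  have hx0 : 0 < x := lt_of_lt_of_le one_pos hx
  have h1 : eiTail x ≤ ∫ t in Ioi x, rexp (-t) * x⁻¹ := by
    refine setIntegral_mono_on (integrableOn_exp_div hx0) ?_ measurableSet_Ioi ?_
    · simpa [IntegrableOn] using (exp_neg_integrableOn_Ioi x one_pos).mul_const x⁻¹
    · intro t ht
      have ht0 : 0 < t := hx0.trans ht
      rw [div_eq_mul_inv]
      have : t⁻¹ ≤ x⁻¹ := by
        rw [inv_le_inv₀ ht0 hx0]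
        exact (le_of_lt ht)
      exact mul_le_mul_of_nonneg_left this (Real.exp_pos _).le
  have h2 : ∫ t in Ioi x, rexp (-t) * x⁻¹ = rexp (-x) * x⁻¹ := by
    rw [integral_mul_const, integral_exp_neg_Ioi]
  have h3 : rexp (-x) * x⁻¹ ≤ rexp (-x) := by
    rw [mul_inv_le_iff₀ hx0]
    nlinarith [Real.exp_pos (-x)]
  linarith [h1, h2.le]

lemma tendsto_eiTail : Tendsto eiTail atTop (𝓝 0) := by
  refine squeeze_zero' ?_ ?_ tendsto_exp_neg_atTop_nhds_zero
  · filter_upwards [eventually_gt_atTop 0] with x hx using eiTail_nonneg hx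
  · filter_upwards [eventually_ge_atTop 1] with x hx using eiTail_le hx

lemma hasDerivAt_eiTail {x : ℝ} (hx : 0 < x) :
    HasDerivAt eiTail (-(rexp (-x) / x)) x := by
  have key : ∀ y z : ℝ, 0 < y → y ≤ z →
      eiTail y = (∫ t in Ioc y z, rexp (-t) / t) + eiTail z := by
    intro y z hy hyz
    rw [eiTail, eiTail, ← setIntegral_union (Set.Ioc_disjoint_Ioi le_rfl) measurableSet_Ioi
      ((integrableOn_exp_div hy).mono_set Ioc_subset_Ioi_self)
      ((integrableOn_exp_div hy).mono_set (Ioi_subset_Ioi hyz)),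
      Ioc_union_Ioi_eq_Ioi hyz]
  have hcont : ContinuousAt (fun t => rexp (-t) / t) x :=
    ((Real.continuous_exp.comp continuous_neg).continuousAt).div continuousAt_id hx.ne'
  have hII : IntervalIntegrable (fun t => rexp (-t) / t) volume x x := by
    rw [intervalIntegrable_iff]
    simp
  have hD := intervalIntegral.integral_hasDerivAt_right hII
    (((Real.measurable_exp.comp measurable_neg).div
      measurable_id).stronglyMeasurable.stronglyMeasurableAtFilter) hcont
  have hφ : HasDerivAt (fun u => eiTail x - ∫ t in x..u, rexp (-t) / t)
      (-(rexp (-x) / x)) x := hD.const_sub _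
  refine hφ.congr_of_eventuallyEq ?_
  filter_upwards [Ioi_mem_nhds hx] with y hy
  rcases le_total x y with hxy | hyx
  · rw [intervalIntegral.integral_of_le hxy, key x y hx hxy]
    ring
  · rw [intervalIntegral.integral_symm, intervalIntegral.integral_of_le hyx, key y x hy hyx]
    ring

lemma integrableOn_exp_neg_mul_log :
    IntegrableOn (fun t => rexp (-t) * Real.log t) (Ioi 0) := by
  have h1 := Real.GammaIntegral_convergent (by norm_num : (0:ℝ) < 1/2)
  have h2 := Real.GammaIntegral_convergent (by norm_num : (0:ℝ) < 2)
  refine Integrable.mono' ((h1.add h2).const_mul 2) ?_ ?_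
  · exact ((Real.measurable_exp.comp measurable_neg).mul
      Real.measurable_log).aestronglyMeasurable
  · rw [ae_restrict_iff' measurableSet_Ioi]
    filter_upwards with t ht
    have ht0 : (0:ℝ) < t := ht
    have hlog : |Real.log t| ≤ 2 * (t ^ ((1:ℝ)/2 - 1) + t ^ ((2:ℝ) - 1)) := by
      have hr1 : t ^ ((2:ℝ) - 1) = t := by
        norm_num
      have hrhalf : (0:ℝ) < t ^ ((1:ℝ)/2 - 1) := Real.rpow_pos_of_pos ht0 _
      rcases le_or_gt 1 t with h | h
      · rw [abs_of_nonneg (Real.log_nonneg h)]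
        have := Real.log_le_sub_one_of_pos ht0
        rw [hr1]
        nlinarith
      · rw [abs_of_nonpos (Real.log_nonpos ht0.le h.le)]
        have hlogr : Real.log (t ^ ((1:ℝ)/2 - 1)) = ((1:ℝ)/2 - 1) * Real.log t :=
          Real.log_rpow ht0 _
        have hb := Real.log_le_sub_one_of_pos hrhalf
        rw [hlogr] at hb
        rw [hr1]
        nlinarith
    rw [Real.norm_eq_abs, abs_mul, abs_of_nonneg (Real.exp_pos _).le]
    have := Real.exp_pos (-t)
    calc rexp (-t) * |Real.log t| ≤ rexp (-t) * (2 * (t ^ ((1:ℝ)/2 - 1) + t ^ ((2:ℝ) - 1))) := by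
          gcongr
      _ = 2 * (rexp (-t) * t ^ ((1:ℝ)/2 - 1) + rexp (-t) * t ^ ((2:ℝ) - 1)) := by ring

lemma integral_exp_neg_mul_log :
    ∫ t in Ioi (0:ℝ), rexp (-t) * Real.log t = -Real.eulerMascheroniConstant := by
  have h1 : HasDerivAt Complex.GammaIntegral
      (∫ t : ℝ in Ioi 0, (t:ℂ) ^ ((1:ℂ) - 1) * (Real.log t * Real.exp (-t))) 1 :=
    Complex.hasDerivAt_GammaIntegral (by simp)
  have heq : Complex.Gamma =ᶠ[𝓝 (1:ℂ)] Complex.GammaIntegral := by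
    filter_upwards [IsOpen.mem_nhds (isOpen_lt continuous_const Complex.continuous_re)
      (by simp : (0:ℝ) < (1:ℂ).re)] with s hs
    exact Complex.Gamma_eq_integral hs
  have h2 : HasDerivAt Complex.GammaIntegral (-(Real.eulerMascheroniConstant : ℂ)) 1 := by
    have := Complex.hasDerivAt_Gamma_one
    exact (heq.hasDerivAt_iff).mp (by exact_mod_cast this)
  have h3 := h2.unique h1
  have h5 : (∫ t : ℝ in Ioi 0, (t:ℂ) ^ ((1:ℂ) - 1) * (Real.log t * Real.exp (-t)))
      = ∫ t in Ioi (0:ℝ), ((rexp (-t) * Real.log t : ℝ) : ℂ) := by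
    refine integral_congr_ae (ae_of_all _ fun t => ?_)
    simp only [sub_self, Complex.cpow_zero, one_mul, Complex.ofReal_mul]
    ring
  have h6 : (∫ t in Ioi (0:ℝ), ((rexp (-t) * Real.log t : ℝ) : ℂ))
      = ((∫ t in Ioi (0:ℝ), rexp (-t) * Real.log t : ℝ) : ℂ) := integral_ofReal
  rw [h5, h6] at h3
  exact_mod_cast h3.symm


lemma integrableOn_density_log {r : ℝ} (hr : 0 < r) :
    IntegrableOn (fun x => r * rexp (-(r * x)) * Real.log x) (Ioi 0) := by
  have h1 : IntegrableOn (fun x => rexp (-(r * x)) * Real.log (r * x)) (Ioi 0) := by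
    have hiff := integrableOn_Ioi_comp_mul_left_iff (fun t => rexp (-t) * Real.log t) 0 hr
    rw [mul_zero] at hiff
    exact hiff.mpr integrableOn_exp_neg_mul_log
  have h2 : IntegrableOn (fun x => rexp (-(r * x))) (Ioi 0) := by
    simpa [neg_mul] using exp_neg_integrableOn_Ioi 0 hr
  have h3 := ((h1.sub (h2.mul_const (Real.log r))).const_mul r)
  refine IntegrableOn.congr_fun h3 ?_ measurableSet_Ioi
  intro x hx
  have hx0 : (0:ℝ) < x := hx
  simp only [Pi.sub_apply]
  rw [Real.log_mul hr.ne' hx0.ne']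
  ring

lemma integral_density_log {r : ℝ} (hr : 0 < r) :
    ∫ x in Ioi (0:ℝ), r * rexp (-(r * x)) * Real.log x
      = -Real.log r - Real.eulerMascheroniConstant := by
  have h1 : IntegrableOn (fun x => rexp (-(r * x)) * Real.log (r * x)) (Ioi 0) := by
    have hiff := integrableOn_Ioi_comp_mul_left_iff (fun t => rexp (-t) * Real.log t) 0 hr
    rw [mul_zero] at hiff
    exact hiff.mpr integrableOn_exp_neg_mul_log
  have h2 : IntegrableOn (fun x => rexp (-(r * x))) (Ioi 0) := by
    simpa [neg_mul] using exp_neg_integrableOn_Ioi 0 hr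
  have hcong : ∫ x in Ioi (0:ℝ), r * rexp (-(r * x)) * Real.log x
      = ∫ x in Ioi (0:ℝ),
        (r * (rexp (-(r * x)) * Real.log (r * x)) - (r * Real.log r) * rexp (-(r * x))) := by
    refine setIntegral_congr_fun measurableSet_Ioi fun x hx => ?_
    have hx0 : (0:ℝ) < x := hx
    rw [Real.log_mul hr.ne' hx0.ne']
    ring
  rw [hcong, integral_sub ((h1.const_mul r)) (h2.const_mul (r * Real.log r)),
    integral_const_mul, integral_const_mul]
  have hA : ∫ x in Ioi (0:ℝ), rexp (-(r * x)) * Real.log (r * x)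
      = r⁻¹ * -Real.eulerMascheroniConstant := by
    have := integral_comp_mul_left_Ioi (fun t => rexp (-t) * Real.log t) 0 hr
    simp only [mul_zero, smul_eq_mul] at this
    rw [this, integral_exp_neg_mul_log]
  have hB : ∫ x in Ioi (0:ℝ), rexp (-(r * x)) = r⁻¹ := by
    have := integral_comp_mul_left_Ioi (fun t => rexp (-t)) 0 hr
    simp only [mul_zero, smul_eq_mul] at this
    rw [this, integral_exp_neg_Ioi]
    simp
  rw [hA, hB]
  field_simp
  ring

lemma integrableOn_density_log1 {r : ℝ} (hr : 0 < r) :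
    IntegrableOn (fun x => r * rexp (-(r * x)) * Real.log (1 + x)) (Ioi 0) := by
  have h0 : IntegrableOn (fun t => rexp (-t) * t) (Ioi 0) := by
    have := Real.GammaIntegral_convergent (by norm_num : (0:ℝ) < 2)
    refine this.congr_fun (fun x hx => ?_) measurableSet_Ioi
    norm_num
  have h1 : IntegrableOn (fun x => rexp (-(r * x)) * (r * x)) (Ioi 0) := by
    have hiff := integrableOn_Ioi_comp_mul_left_iff (fun t => rexp (-t) * t) 0 hr
    rw [mul_zero] at hiff
    exact hiff.mpr h0
  refine h1.mono' ?_ ?_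
  · exact ((measurable_const.mul (Real.measurable_exp.comp (measurable_const.mul
      measurable_id).neg)).mul ((measurable_const.add measurable_id).log)).aestronglyMeasurable
  · rw [ae_restrict_iff' measurableSet_Ioi]
    filter_upwards with x hx
    have hx0 : (0:ℝ) < x := hx
    have hlog0 : 0 ≤ Real.log (1 + x) := Real.log_nonneg (by linarith)
    have hlogle : Real.log (1 + x) ≤ x := by
      have := Real.log_le_sub_one_of_pos (by linarith : (0:ℝ) < 1 + x)
      linarith
    rw [Real.norm_eq_abs, abs_of_nonneg (by positivity)]
    have he := Real.exp_pos (-(r * x))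
    nlinarith [mul_le_mul_of_nonneg_left hlogle (le_of_lt (mul_pos hr he))]

lemma integral_density_log1 {r : ℝ} (hr : 0 < r) :
    ∫ x in Ioi (0:ℝ), r * rexp (-(r * x)) * Real.log (1 + x)
      = rexp r * eiTail r := by
  set F : ℝ → ℝ := fun x => -(rexp (-(r * x)) * Real.log (1 + x)) - rexp r * eiTail (r * (1 + x))
    with hF
  have hderiv : ∀ x ∈ Ici (0:ℝ), HasDerivAt F (r * rexp (-(r * x)) * Real.log (1 + x)) x := by
    intro x hx
    have hx0 : (0:ℝ) ≤ x := hx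
    have h1x : (0:ℝ) < 1 + x := by linarith
    have hrx : 0 < r * (1 + x) := by positivity
    have h1 : HasDerivAt (fun y : ℝ => rexp (-(r * y))) (-r * rexp (-(r * x))) x := by
      have hinner : HasDerivAt (fun y : ℝ => -(r * y)) (-r) x := by
        exact ((hasDerivAt_id x).const_mul r).neg.congr_deriv (by ring)
      simpa [mul_comm] using hinner.exp
    have h2 : HasDerivAt (fun y : ℝ => Real.log (1 + y)) (1 / (1 + x)) x := by
      have hinner : HasDerivAt (fun y : ℝ => 1 + y) (1:ℝ) x := by
        simpa using (hasDerivAt_id x).const_add 1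
      simpa using hinner.log h1x.ne'
    have h3 : HasDerivAt (fun y : ℝ => eiTail (r * (1 + y)))
        (-(rexp (-(r * (1 + x))) / (r * (1 + x))) * r) x := by
      have hinner : HasDerivAt (fun y : ℝ => r * (1 + y)) r x := by
        simpa using ((hasDerivAt_id x).const_add 1).const_mul r
      exact (hasDerivAt_eiTail hrx).comp x hinner
    have h4 := ((h1.mul h2).neg).sub (h3.const_mul (rexp r))
    refine h4.congr_deriv ?_
    have hcollapse : rexp r * rexp (-(r * (1 + x))) = rexp (-(r * x)) := by
      rw [← Real.exp_add]
      congr 1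
      ring
    have hkey : rexp r * (-(rexp (-(r * (1 + x))) / (r * (1 + x))) * r)
        = -(rexp (-(r * x)) / (1 + x)) := by
      have hq : r / (r * (1 + x)) = 1 / (1 + x) := by
        field_simp
      calc rexp r * (-(rexp (-(r * (1 + x))) / (r * (1 + x))) * r)
          = -((rexp r * rexp (-(r * (1 + x)))) * (r / (r * (1 + x)))) := by ring
        _ = -(rexp (-(r * x)) * (1 / (1 + x))) := by rw [hcollapse, hq]
        _ = -(rexp (-(r * x)) / (1 + x)) := by ring
    rw [hkey]
    ring
  have hF0 : F 0 = -(rexp r * eiTail r) := by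
    simp [hF]
  have htends : Tendsto F atTop (𝓝 0) := by
    have t1 : Tendsto (fun x : ℝ => rexp (-(r * x)) * Real.log (1 + x)) atTop (𝓝 0) := by
      refine squeeze_zero' (g := fun x => x ^ (1:ℝ) * rexp (-r * x)) ?_ ?_ ?_
      · filter_upwards [eventually_ge_atTop (0:ℝ)] with x hx
        have : 0 ≤ Real.log (1 + x) := Real.log_nonneg (by linarith)
        positivity
      · filter_upwards [eventually_ge_atTop (1:ℝ)] with x hx
        have h1x : (0:ℝ) < 1 + x := by linarith
        have hlogle : Real.log (1 + x) ≤ x := by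
          have := Real.log_le_sub_one_of_pos h1x
          linarith
        have hxpow : x ^ (1:ℝ) = x := Real.rpow_one x
        calc rexp (-(r * x)) * Real.log (1 + x) ≤ rexp (-(r * x)) * x := by
              have := Real.exp_pos (-(r * x))
              nlinarith
          _ = x ^ (1:ℝ) * rexp (-r * x) := by rw [hxpow]; ring_nf
      · simpa using tendsto_rpow_mul_exp_neg_mul_atTop_nhds_zero 1 r hr
    have t2 : Tendsto (fun x : ℝ => rexp r * eiTail (r * (1 + x))) atTop (𝓝 0) := by
      have hcomp : Tendsto (fun x : ℝ => r * (1 + x)) atTop atTop := by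
        apply Tendsto.const_mul_atTop hr
        exact tendsto_atTop_add_const_left atTop 1 tendsto_id
      have := (tendsto_eiTail.comp hcomp).const_mul (rexp r)
      simpa using this
    have := (t1.neg.sub t2)
    simpa [hF] using this
  have key := integral_Ioi_of_hasDerivAt_of_tendsto' hderiv
    (integrableOn_density_log1 hr) htends
  rw [key, hF0]
  ring


lemma expMeasure_eq (r : ℝ) :
    expMeasure r = volume.withDensity
      (fun x => ((Real.toNNReal (exponentialPDFReal r x) : ℝ≥0) : ℝ≥0∞)) := rfl

lemma pdf_indicator (r : ℝ) (g : ℝ → ℝ) :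
    (fun x => exponentialPDFReal r x * g x)
      = (Ici (0:ℝ)).indicator (fun x => r * rexp (-(r * x)) * g x) := by
  funext x
  by_cases hx : 0 ≤ x
  · simp [exponentialPDFReal, gammaPDFReal, hx, indicator_of_mem, Real.Gamma_one,
      Real.rpow_one]
  · simp [exponentialPDFReal, gammaPDFReal, hx, indicator_of_notMem]

lemma expMeasure_integrable_iff {r : ℝ} (hr : 0 < r) {g : ℝ → ℝ} :
    Integrable g (expMeasure r)
      ↔ IntegrableOn (fun x => r * rexp (-(r * x)) * g x) (Ioi 0) := by
  rw [expMeasure_eq, integrable_withDensity_iff_integrable_smul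
    ((measurable_exponentialPDFReal r).real_toNNReal)]
  have hfun : (fun x => (Real.toNNReal (exponentialPDFReal r x) : ℝ≥0) • g x)
      = (Ici (0:ℝ)).indicator (fun x => r * rexp (-(r * x)) * g x) := by
    rw [← pdf_indicator]
    funext x
    rw [NNReal.smul_def, Real.coe_toNNReal _ (exponentialPDFReal_nonneg hr x), smul_eq_mul]
  rw [hfun, integrable_indicator_iff measurableSet_Ici, integrableOn_Ici_iff_integrableOn_Ioi]

lemma expMeasure_integral (r : ℝ) (hr : 0 < r) (g : ℝ → ℝ) :
    ∫ x, g x ∂(expMeasure r) = ∫ x in Ioi 0, r * rexp (-(r * x)) * g x := by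
  rw [expMeasure_eq, integral_withDensity_eq_integral_smul
    ((measurable_exponentialPDFReal r).real_toNNReal)]
  have hfun : (fun x => (Real.toNNReal (exponentialPDFReal r x) : ℝ≥0) • g x)
      = (Ici (0:ℝ)).indicator (fun x => r * rexp (-(r * x)) * g x) := by
    rw [← pdf_indicator]
    funext x
    rw [NNReal.smul_def, Real.coe_toNNReal _ (exponentialPDFReal_nonneg hr x), smul_eq_mul]
  rw [hfun, integral_indicator measurableSet_Ici, integral_Ici_eq_integral_Ioi]

lemma expMeasure_integrable_log {r : ℝ} (hr : 0 < r) :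
    Integrable Real.log (expMeasure r) :=
  (expMeasure_integrable_iff hr).mpr (integrableOn_density_log hr)

lemma expMeasure_integral_log {r : ℝ} (hr : 0 < r) :
    ∫ x, Real.log x ∂(expMeasure r) = -Real.log r - Real.eulerMascheroniConstant := by
  rw [expMeasure_integral r hr Real.log, integral_density_log hr]

lemma expMeasure_integrable_log1 {r : ℝ} (hr : 0 < r) :
    Integrable (fun x => Real.log (1 + x)) (expMeasure r) :=
  (expMeasure_integrable_iff hr).mpr (integrableOn_density_log1 hr)

lemma expMeasure_integral_log1 {r : ℝ} (hr : 0 < r) :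
    ∫ x, Real.log (1 + x) ∂(expMeasure r) = rexp r * eiTail r := by
  rw [expMeasure_integral r hr _, integral_density_log1 hr]

lemma expMeasure_Iic_zero {r : ℝ} : expMeasure r (Iic 0) = 0 := by
  rw [expMeasure_eq, withDensity_apply _ measurableSet_Iic,
    Measure.restrict_congr_set Iio_ae_eq_Iic.symm]
  have := lintegral_exponentialPDF_of_nonpos (le_refl (0:ℝ)) (r := r)
  rw [← this]
  rfl

lemma hasDerivAt_logexp (x : ℝ) :
    HasDerivAt (fun x => Real.log (1 + rexp x)) (rexp x / (1 + rexp x)) x := by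
  have h : HasDerivAt (fun x : ℝ => 1 + rexp x) (rexp x) x := by
    simpa using (Real.hasDerivAt_exp x).const_add 1
  exact h.log (by positivity)

lemma convexOn_logexp : ConvexOn ℝ univ (fun x => Real.log (1 + rexp x)) := by
  refine Monotone.convexOn_univ_of_deriv (fun x => (hasDerivAt_logexp x).differentiableAt) ?_
  have hderiv : deriv (fun x => Real.log (1 + rexp x)) = fun x => rexp x / (1 + rexp x) :=
    funext fun x => (hasDerivAt_logexp x).deriv
  rw [hderiv]
  intro a b hab
  have ha := Real.exp_pos a
  have hb := Real.exp_pos b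
  rw [div_le_div_iff₀ (by positivity) (by positivity)]
  nlinarith [Real.exp_le_exp.2 hab]

lemma logexp_nonneg (x : ℝ) : 0 ≤ Real.log (1 + rexp x) :=
  Real.log_nonneg (by nlinarith [Real.exp_pos x])

lemma logexp_le (x : ℝ) : Real.log (1 + rexp x) ≤ Real.log 2 + |x| := by
  have h1 : 1 + rexp x ≤ 2 * rexp |x| := by
    have h2 : rexp x ≤ rexp |x| := Real.exp_le_exp.2 (le_abs_self x)
    have h3 : (1:ℝ) ≤ rexp |x| := by
      rw [show (1:ℝ) = rexp 0 by simp]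
      exact Real.exp_le_exp.2 (abs_nonneg x)
    linarith
  calc Real.log (1 + rexp x) ≤ Real.log (2 * rexp |x|) :=
        Real.log_le_log (by positivity) h1
    _ = Real.log 2 + |x| := by
      rw [Real.log_mul (by norm_num) (Real.exp_pos _).ne', Real.log_exp]

end SecrecyAux


/-- Lower bound `Î₁` of the without-jamming ESSR: for independent exponential `R`, `S`
with means `m_R`, `m_S`,
`E[ln(1 + R·S/(S+1))] ≥ ln(1 + m_R·m_S·exp(-2γ)·exp(-exp(1/m_S)·∫_{1/m_S}^∞ exp(-t)/t dt))`. -/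
theorem lower_bound_I1_without_jamming
    {Ω : Type*} [MeasurableSpace Ω] (μ : Measure Ω) [IsProbabilityMeasure μ]
    (R S : Ω → ℝ) (mR mS : ℝ) (hmR : 0 < mR) (hmS : 0 < mS)
    (hRm : Measurable R) (hSm : Measurable S)
    (hR : Measure.map R μ = expMeasure (1 / mR))
    (hS : Measure.map S μ = expMeasure (1 / mS))
    (hindep : IndepFun R S μ) :
    ∫ ω, Real.log (1 + R ω * S ω / (S ω + 1)) ∂μ
      ≥ Real.log (1 + mR * mS * Real.exp (-2 * Real.eulerMascheroniConstant)
          * Real.exp (-(Real.exp (1 / mS) * ∫ t in Set.Ioi (1 / mS), Real.exp (-t) / t))) := by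
  classical
  have hrR : 0 < 1 / mR := by positivity
  have hrS : 0 < 1 / mS := by positivity
  -- a.e. positivity of R and S
  have hRpos : ∀ᵐ ω ∂μ, 0 < R ω := by
    have hmap : μ (R ⁻¹' Set.Iic 0) = 0 := by
      rw [← Measure.map_apply hRm measurableSet_Iic, hR, SecrecyAux.expMeasure_Iic_zero]
    rw [ae_iff]
    convert hmap using 2
    ext ω
    simp [not_lt]
  have hSpos : ∀ᵐ ω ∂μ, 0 < S ω := by
    have hmap : μ (S ⁻¹' Set.Iic 0) = 0 := by
      rw [← Measure.map_apply hSm measurableSet_Iic, hS, SecrecyAux.expMeasure_Iic_zero]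
    rw [ae_iff]
    convert hmap using 2
    ext ω
    simp [not_lt]
  -- integrability and expectations of the logarithms
  have hIlogR : Integrable (fun ω => Real.log (R ω)) μ := by
    have h := integrable_map_measure (f := R) (g := Real.log) (μ := μ)
      Real.measurable_log.aestronglyMeasurable hRm.aemeasurable
    rw [hR] at h
    exact h.mp (SecrecyAux.expMeasure_integrable_log hrR)
  have hIlogS : Integrable (fun ω => Real.log (S ω)) μ := by
    have h := integrable_map_measure (f := S) (g := Real.log) (μ := μ)
      Real.measurable_log.aestronglyMeasurable hSm.aemeasurable
    rw [hS] at h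
    exact h.mp (SecrecyAux.expMeasure_integrable_log hrS)
  have hIlog1S : Integrable (fun ω => Real.log (1 + S ω)) μ := by
    have h := integrable_map_measure (f := S) (g := fun x => Real.log (1 + x)) (μ := μ)
      ((measurable_const.add measurable_id).log).aestronglyMeasurable hSm.aemeasurable
    rw [hS] at h
    exact h.mp (SecrecyAux.expMeasure_integrable_log1 hrS)
  have hElogR : ∫ ω, Real.log (R ω) ∂μ = Real.log mR - Real.eulerMascheroniConstant := by
    rw [← integral_map hRm.aemeasurable Real.measurable_log.aestronglyMeasurable, hR,
      SecrecyAux.expMeasure_integral_log hrR, one_div, Real.log_inv]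
    ring
  have hElogS : ∫ ω, Real.log (S ω) ∂μ = Real.log mS - Real.eulerMascheroniConstant := by
    rw [← integral_map hSm.aemeasurable Real.measurable_log.aestronglyMeasurable, hS,
      SecrecyAux.expMeasure_integral_log hrS, one_div, Real.log_inv]
    ring
  have hElog1S : ∫ ω, Real.log (1 + S ω) ∂μ
      = Real.exp (1 / mS) * SecrecyAux.eiTail (1 / mS) := by
    rw [← integral_map (f := fun x => Real.log (1 + x)) hSm.aemeasurable
      ((measurable_const.add measurable_id).log).aestronglyMeasurable, hS,
      SecrecyAux.expMeasure_integral_log1 hrS]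
  set X : Ω → ℝ := fun ω => Real.log (R ω) + Real.log (S ω) - Real.log (1 + S ω) with hXdef
  have hXmeas : Measurable X :=
    ((Real.measurable_log.comp hRm).add (Real.measurable_log.comp hSm)).sub
      ((measurable_const.add hSm).log)
  have hXint : Integrable X μ := (hIlogR.add hIlogS).sub hIlog1S
  have hEX : ∫ ω, X ω ∂μ
      = Real.log mR + Real.log mS - 2 * Real.eulerMascheroniConstant
        - Real.exp (1 / mS) * SecrecyAux.eiTail (1 / mS) := by
    have hadd : Integrable (fun ω => Real.log (R ω) + Real.log (S ω)) μ := hIlogR.add hIlogS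
    rw [hXdef]
    rw [integral_sub hadd hIlog1S, integral_add hIlogR hIlogS, hElogR, hElogS, hElog1S]
    ring
  -- integrability of log(1 + exp X)
  have hgXint : Integrable (fun ω => Real.log (1 + Real.exp (X ω))) μ := by
    refine Integrable.mono' (g := fun ω => Real.log 2 + |X ω|)
      ((integrable_const (Real.log 2)).add hXint.abs) ?_ ?_
    · exact ((measurable_const.add (Real.measurable_exp.comp hXmeas)).log).aestronglyMeasurable
    · filter_upwards with ω
      rw [Real.norm_eq_abs, abs_of_nonneg (SecrecyAux.logexp_nonneg _)]
      exact SecrecyAux.logexp_le _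
  -- Jensen's inequality
  have hjensen : Real.log (1 + Real.exp (∫ ω, X ω ∂μ))
      ≤ ∫ ω, Real.log (1 + Real.exp (X ω)) ∂μ := by
    have h := SecrecyAux.convexOn_logexp.map_integral_le
      (Continuous.continuousOn (by
        exact (continuous_const.add Real.continuous_exp).log
          (fun x => (add_pos one_pos (Real.exp_pos x)).ne')))
      isClosed_univ (Filter.Eventually.of_forall fun ω => Set.mem_univ (X ω)) hXint ?_
    · exact h
    · exact hgXint
  -- the left-hand side equals the expectation of log(1 + exp X)
  have hcongr : ∫ ω, Real.log (1 + R ω * S ω / (S ω + 1)) ∂μ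
      = ∫ ω, Real.log (1 + Real.exp (X ω)) ∂μ := by
    refine integral_congr_ae ?_
    filter_upwards [hRpos, hSpos] with ω hRw hSw
    have h1S : (0:ℝ) < 1 + S ω := by linarith
    have hexpX : Real.exp (X ω) = R ω * S ω / (S ω + 1) := by
      rw [hXdef]
      rw [Real.exp_sub, Real.exp_add, Real.exp_log hRw, Real.exp_log hSw, Real.exp_log h1S,
        add_comm 1 (S ω)]
    rw [hexpX]
  -- identify the right-hand side with log(1 + exp(E[X]))
  have hRHS : Real.log (1 + mR * mS * Real.exp (-2 * Real.eulerMascheroniConstant)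
        * Real.exp (-(Real.exp (1 / mS) * ∫ t in Set.Ioi (1 / mS), Real.exp (-t) / t)))
      = Real.log (1 + Real.exp (∫ ω, X ω ∂μ)) := by
    rw [hEX]
    congr 1
    have hK : (∫ t in Set.Ioi (1 / mS), Real.exp (-t) / t) = SecrecyAux.eiTail (1 / mS) := rfl
    rw [hK, show Real.log mR + Real.log mS - 2 * Real.eulerMascheroniConstant
        - Real.exp (1 / mS) * SecrecyAux.eiTail (1 / mS)
      = Real.log mR + (Real.log mS + ((-2 * Real.eulerMascheroniConstant)
        + (-(Real.exp (1 / mS) * SecrecyAux.eiTail (1 / mS))))) by ring,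
      Real.exp_add, Real.exp_add, Real.exp_add, Real.exp_log hmR, Real.exp_log hmS]
    ring
  rw [ge_iff_le, hcongr, hRHS]
  exact hjensen
end

section
/- Let X and Y be independent exponentially distributed random variables with means m_x > 0 and m_y > 0, with m_x ≠ m_y. Then E[ln(1 + X + Y)] = (m_x/(m_x − m_y))·exp(1/m_x)·∫_{1/m_x}^∞ (exp(−t)/t) dt − (m_y/(m_x − m_y))·exp(1/m_y)·∫_{1/m_y}^∞ (exp(−t)/t) dt. (Equivalently, E[ln(1 + X + Y)] = (m_x/(m_y − m_x))·exp(1/m_x)·Ei(−1/m_x) + (m_y/(m_x − m_y))·exp(1/m_y)·Ei(−1/m_y), where Ei is the exponential integral.) -/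
open MeasureTheory ProbabilityTheory Real

namespace ESSRAux

open scoped ENNReal NNReal
open MeasureTheory Real Set Filter Topology ProbabilityTheory

lemma tendsto_exp_neg_mul {c : ℝ} (hc : 0 < c) :
    Tendsto (fun x : ℝ => exp (-(c * x))) atTop (𝓝 0) := by
  have h : Tendsto (fun x : ℝ => -(c * x)) atTop atBot := by
    have := (tendsto_id (α := ℝ)).const_mul_atTop hc
    simpa using tendsto_neg_atBot_iff.mpr this
  exact Real.tendsto_exp_atBot.comp h

lemma tendsto_id_mul_exp_neg_mul {c : ℝ} (hc : 0 < c) :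
    Tendsto (fun x : ℝ => x * exp (-(c * x))) atTop (𝓝 0) := by
  have h1 : Tendsto (fun z : ℝ => c⁻¹ * (z * exp (-z))) atTop (𝓝 0) := by
    simpa using (tendsto_const_nhds.mul (by simpa using tendsto_pow_mul_exp_neg_atTop_nhds_zero 1) :
      Tendsto (fun z : ℝ => c⁻¹ * (z * exp (-z))) atTop (𝓝 (c⁻¹ * 0)))
  have h2 : Tendsto (fun x : ℝ => c * x) atTop atTop := tendsto_id.const_mul_atTop hc
  have := h1.comp h2
  refine this.congr (fun x => ?_)
  simp only [Function.comp]
  field_simp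

lemma integrableOn_exp_neg_mul {c : ℝ} (hc : 0 < c) (u : ℝ) :
    IntegrableOn (fun x : ℝ => exp (-(c * x))) (Ioi u) := by
  simpa [neg_mul] using exp_neg_integrableOn_Ioi u hc

lemma hasDerivAt_aux {c : ℝ} (hc : 0 < c) (x : ℝ) :
    HasDerivAt (fun s : ℝ => -((s / c + 1 / c ^ 2) * exp (-(c * s)))) (x * exp (-(c * x))) x := by
  have h1 : HasDerivAt (fun s : ℝ => s / c + 1 / c ^ 2) (1 / c) x := by
    have := ((hasDerivAt_id x).div_const c).add_const (1 / c ^ 2)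
    simpa [one_div] using this
  have h2 : HasDerivAt (fun s : ℝ => exp (-(c * s))) (-c * exp (-(c * x))) x := by
    have : HasDerivAt (fun s : ℝ => -(c * s)) (-c) x := by
      exact (((hasDerivAt_id x).const_mul c).neg).congr_deriv (by ring)
    simpa [mul_comm] using this.exp
  have := (h1.mul h2).neg
  refine this.congr_deriv ?_
  field_simp
  ring

lemma tendsto_anti {c : ℝ} (hc : 0 < c) :
    Tendsto (fun s : ℝ => -((s / c + 1 / c ^ 2) * exp (-(c * s)))) atTop (𝓝 0) := by
  have h : Tendsto (fun s : ℝ => (s / c + 1 / c ^ 2) * exp (-(c * s))) atTop (𝓝 0) := by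
    have h1 := (tendsto_id_mul_exp_neg_mul hc).const_mul c⁻¹
    have h2 := (tendsto_exp_neg_mul hc).const_mul (1 / c ^ 2)
    have := h1.add h2
    simp only [mul_zero, add_zero] at this
    refine this.congr (fun x => ?_) |>.congr (fun x => rfl)
    ring
  simpa using h.neg

lemma integrableOn_id_mul_exp_neg_mul {c : ℝ} (hc : 0 < c) {u : ℝ} (hu : 0 ≤ u) :
    IntegrableOn (fun x : ℝ => x * exp (-(c * x))) (Ioi u) := by
  refine integrableOn_Ioi_deriv_of_nonneg ?_ (fun x _ => hasDerivAt_aux hc x)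
    (fun x hx => mul_nonneg (le_trans hu hx.le) (exp_pos _).le) (tendsto_anti hc)
  exact ((hasDerivAt_aux hc u).continuousAt).continuousWithinAt

lemma integral_id_mul_exp_neg_mul {c : ℝ} (hc : 0 < c) {u : ℝ} (hu : 0 ≤ u) :
    ∫ x in Ioi u, x * exp (-(c * x)) = (u / c + 1 / c ^ 2) * exp (-(c * u)) := by
  have := integral_Ioi_of_hasDerivAt_of_tendsto' (fun x _ => hasDerivAt_aux hc x)
    (integrableOn_id_mul_exp_neg_mul hc hu) (tendsto_anti hc)
  rw [this]; ring

lemma shift_Ioi (f : ℝ → ℝ) (u c : ℝ) :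
    ∫ x in Ioi u, f (x + c) = ∫ x in Ioi (u + c), f x := by
  rw [← integral_indicator measurableSet_Ioi, ← integral_indicator measurableSet_Ioi]
  rw [← integral_add_right_eq_self (fun x => (Ioi (u + c)).indicator f x) c]
  congr 1
  ext x
  by_cases h : x ∈ Ioi u
  · rw [Set.indicator_of_mem h, Set.indicator_of_mem (by simpa using add_lt_add_right h.out c)]
  · rw [Set.indicator_of_notMem h, Set.indicator_of_notMem
      (by simp only [mem_Ioi, not_lt] at h ⊢; linarith)]

lemma log_le_self {s : ℝ} (hs : 0 ≤ s) : log (1 + s) ≤ s := by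
  have := Real.log_le_sub_one_of_pos (x := 1 + s) (by linarith)
  linarith

lemma log_nonneg' {s : ℝ} (hs : 0 ≤ s) : 0 ≤ log (1 + s) :=
  Real.log_nonneg (by linarith)

lemma meas_exp_neg_mul (c : ℝ) : Measurable (fun s : ℝ => exp (-(c * s))) :=
  Real.measurable_exp.comp ((measurable_id.const_mul c).neg)

lemma meas_log_mul_exp (c : ℝ) :
    Measurable (fun s : ℝ => log (1 + s) * exp (-(c * s))) :=
  (Real.measurable_log.comp (measurable_const.add measurable_id)).mul (meas_exp_neg_mul c)

lemma integrableOn_log_mul_exp {c : ℝ} (hc : 0 < c) {u : ℝ} (hu : 0 ≤ u) :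
    IntegrableOn (fun s : ℝ => log (1 + s) * exp (-(c * s))) (Ioi u) := by
  refine Integrable.mono (integrableOn_id_mul_exp_neg_mul hc hu)
    ((meas_log_mul_exp c).aestronglyMeasurable) ?_
  rw [ae_restrict_iff' measurableSet_Ioi]
  refine ae_of_all _ (fun s hs => ?_)
  have hs0 : 0 ≤ s := le_trans hu hs.out.le
  rw [Real.norm_eq_abs, Real.norm_eq_abs,
    abs_of_nonneg (mul_nonneg (log_nonneg' hs0) (exp_pos _).le),
    abs_of_nonneg (mul_nonneg hs0 (exp_pos _).le)]
  exact mul_le_mul_of_nonneg_right (log_le_self hs0) (exp_pos _).le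

/-- Key computation: `∫_0^∞ log(1+s) e^{-cs} ds = (1/c) e^c ∫_c^∞ e^{-t}/t dt`. -/
lemma integral_log_mul_exp {c : ℝ} (hc : 0 < c) :
    ∫ s in Ioi 0, log (1 + s) * exp (-(c * s))
      = 1 / c * exp c * ∫ t in Ioi c, exp (-t) / t := by
  -- Step 1: integration by parts
  have hu : ∀ x ∈ Ioi (0:ℝ), HasDerivAt (fun s => log (1 + s)) (1 / (1 + x)) x := by
    intro x hx
    have h1 : HasDerivAt (fun s : ℝ => 1 + s) 1 x := by simpa using (hasDerivAt_id x).const_add 1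
    simpa using (h1.log (by linarith [hx.out]))
  have hv : ∀ x ∈ Ioi (0:ℝ), HasDerivAt (fun s => -(1 / c) * exp (-(c * s)))
      (exp (-(c * x))) x := by
    intro x _
    have h2 : HasDerivAt (fun s : ℝ => exp (-(c * s))) (-c * exp (-(c * x))) x := by
      have : HasDerivAt (fun s : ℝ => -(c * s)) (-c) x := by
        exact (((hasDerivAt_id x).const_mul c).neg).congr_deriv (by ring)
      simpa [mul_comm] using this.exp
    have := h2.const_mul (-(1 / c))
    refine this.congr_deriv ?_
    field_simp
  have huv' : IntegrableOn ((fun s => log (1 + s)) * (fun s => exp (-(c * s)))) (Ioi (0:ℝ)) := by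
    simpa [Pi.mul_def] using integrableOn_log_mul_exp hc le_rfl
  have hu'v : IntegrableOn ((fun x => 1 / (1 + x)) * (fun s => -(1 / c) * exp (-(c * s))))
      (Ioi (0:ℝ)) := by
    refine Integrable.mono ((integrableOn_exp_neg_mul hc 0).const_mul (1 / c))
      (((measurable_const.div (measurable_const.add measurable_id)).mul
        ((meas_exp_neg_mul c).const_mul _)).aestronglyMeasurable) ?_
    rw [ae_restrict_iff' measurableSet_Ioi]
    refine ae_of_all _ (fun s hs => ?_)
    have hs0 : (0:ℝ) < s := hs.out
    simp only [Pi.mul_apply, Real.norm_eq_abs]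
    rw [abs_mul, abs_mul, abs_neg, abs_of_nonneg (by positivity : (0:ℝ) ≤ 1/c),
      abs_of_nonneg (exp_pos _).le,
      abs_of_nonneg (by positivity : (0:ℝ) ≤ 1 / (1 + s)),
      abs_of_nonneg (mul_nonneg (by positivity : (0:ℝ) ≤ 1/c) (exp_pos _).le)]
    have h1s : 1 / (1 + s) ≤ 1 := by
      rw [div_le_one (by linarith)]; linarith
    calc 1 / (1 + s) * (1/c * exp (-(c*s))) ≤ 1 * (1/c * exp (-(c*s))) :=
          mul_le_mul_of_nonneg_right h1s (by positivity)
      _ = 1/c * exp (-(c*s)) := one_mul _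
  have h_zero : Tendsto ((fun s => log (1 + s)) * (fun s => -(1 / c) * exp (-(c * s))))
      (𝓝[>] (0:ℝ)) (𝓝 0) := by
    have hcont : ContinuousAt (fun s : ℝ => log (1 + s) * (-(1 / c) * exp (-(c * s)))) 0 := by
      refine ContinuousAt.mul ?_ (by fun_prop)
      exact (Real.continuousAt_log (by norm_num)).comp (by fun_prop)
    have h0 : Tendsto (fun s : ℝ => log (1 + s) * (-(1 / c) * exp (-(c * s)))) (𝓝[>] (0:ℝ))
        (𝓝 (log (1 + 0) * (-(1 / c) * exp (-(c * 0))))) :=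
      (hcont.tendsto).mono_left nhdsWithin_le_nhds
    have : Tendsto (fun s : ℝ => log (1 + s) * (-(1 / c) * exp (-(c * s)))) (𝓝[>] (0:ℝ)) (𝓝 0) := by
      simpa using h0
    simpa [Pi.mul_def] using this
  have h_infty : Tendsto ((fun s => log (1 + s)) * (fun s => -(1 / c) * exp (-(c * s))))
      atTop (𝓝 0) := by
    refine squeeze_zero_norm' ?_ (by simpa using (tendsto_id_mul_exp_neg_mul hc).const_mul (1/c))
    filter_upwards [eventually_ge_atTop (0:ℝ)] with s hs
    simp only [Pi.mul_apply, Real.norm_eq_abs]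
    rw [abs_mul, abs_mul, abs_neg, abs_of_nonneg (log_nonneg' hs),
      abs_of_nonneg (by positivity : (0:ℝ) ≤ 1/c), abs_of_nonneg (exp_pos _).le]
    calc log (1+s) * (1/c * exp (-(c*s))) ≤ s * (1/c * exp (-(c*s))) := by
          refine mul_le_mul_of_nonneg_right (log_le_self hs) (by positivity)
      _ = 1/c * (s * exp (-(c*s))) := by ring
      _ ≤ _ := by rw [one_div]
  have ibp := integral_Ioi_mul_deriv_eq_deriv_mul hu hv huv' hu'v h_zero h_infty
  -- ibp : ∫ log(1+x)*exp(-(c*x)) = 0 - 0 - ∫ (1/(1+x)) * (-(1/c) * exp(-(c*x)))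
  have step1 : ∫ s in Ioi 0, log (1 + s) * exp (-(c * s))
      = 1 / c * ∫ s in Ioi (0:ℝ), exp (-(c * s)) / (1 + s) := by
    rw [ibp]
    have hpt : ∫ x in Ioi (0:ℝ), 1 / (1 + x) * (-(1 / c) * exp (-(c * x)))
        = -∫ x in Ioi (0:ℝ), 1 / c * (exp (-(c * x)) / (1 + x)) := by
      rw [← integral_neg]
      refine setIntegral_congr_fun measurableSet_Ioi (fun s hs => ?_)
      have h1s : (0:ℝ) < 1 + s := by linarith [hs.out]
      field_simp
    rw [hpt, integral_const_mul]
    ring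
  -- Step 2: substitution
  have step2 : ∫ s in Ioi (0:ℝ), exp (-(c * s)) / (1 + s)
      = exp c * ∫ t in Ioi c, exp (-t) / t := by
    have h1 : ∫ s in Ioi (0:ℝ), exp (-(c * s)) / (1 + s)
        = ∫ t in Ioi (1:ℝ), exp c * (exp (-(c * t)) / t) := by
      have := shift_Ioi (fun t => exp c * (exp (-(c * t)) / t)) 0 1
      rw [zero_add] at this
      rw [← this]
      refine setIntegral_congr_fun measurableSet_Ioi (fun s hs => ?_)
      have : exp c * exp (-(c * (s+1))) = exp (-(c * s)) := by
        rw [← exp_add]; ring_nf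
      rw [mul_div_assoc'] at *
      rw [this]
      ring_nf
    have h2 : ∫ t in Ioi (1:ℝ), exp (-(c * t)) / t = ∫ t in Ioi c, exp (-t) / t := by
      have := integral_comp_mul_left_Ioi (fun t => exp (-t) / t) 1 hc
      simp only [mul_one, smul_eq_mul] at this
      -- this : ∫ x in Ioi 1, exp (-(c*x))/(c*x) = c⁻¹ * ∫ x in Ioi c, exp (-x)/x
      have h3 : ∫ x in Ioi (1:ℝ), exp (-(c * x)) / (c * x)
          = c⁻¹ * ∫ x in Ioi (1:ℝ), exp (-(c * x)) / x := by
        rw [← integral_const_mul _ _]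
        refine setIntegral_congr_fun measurableSet_Ioi (fun x hx => ?_)
        have hx0 : (0:ℝ) < x := lt_trans one_pos hx.out
        field_simp
      rw [h3] at this
      exact mul_left_cancel₀ (inv_ne_zero hc.ne') this
    rw [h1, integral_const_mul _ _, h2]
  rw [step1, step2, mul_assoc]

lemma expMeasure_eq (r : ℝ) :
    expMeasure r = volume.withDensity (fun x => ((exponentialPDFReal r x).toNNReal : ℝ≥0∞)) := rfl

lemma exponentialPDFReal_eq (r x : ℝ) :
    exponentialPDFReal r x = if 0 ≤ x then r * exp (-(r * x)) else 0 := by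
  rw [exponentialPDFReal, gammaPDFReal]
  simp only [rpow_one, Real.Gamma_one, div_one, sub_self, rpow_zero, mul_one]

lemma expMeasure_Iio_zero {r : ℝ} : expMeasure r (Iio 0) = 0 := by
  rw [expMeasure_eq, withDensity_apply _ measurableSet_Iio]
  have : ∀ᵐ x ∂(volume.restrict (Iio (0:ℝ))),
      ((exponentialPDFReal r x).toNNReal : ℝ≥0∞) = 0 := by
    rw [ae_restrict_iff' measurableSet_Iio]
    refine ae_of_all _ (fun x hx => ?_)
    rw [exponentialPDFReal_eq, if_neg (not_le.mpr hx.out)]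
    simp
  rw [lintegral_congr_ae this]
  simp

lemma ae_nonneg_expMeasure (r : ℝ) : ∀ᵐ x ∂(expMeasure r), 0 ≤ x := by
  rw [ae_iff]
  have : {x : ℝ | ¬ 0 ≤ x} = Iio 0 := by ext x; simp [not_le]
  rw [this]
  exact expMeasure_Iio_zero

lemma meas_pdf (r : ℝ) : Measurable (fun x => (exponentialPDFReal r x).toNNReal) :=
  (measurable_exponentialPDFReal r).real_toNNReal

/-- Integral against the exponential measure as a Lebesgue integral. -/
lemma integral_expMeasure {r : ℝ} (hr : 0 < r) (f : ℝ → ℝ) :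
    ∫ x, f x ∂(expMeasure r) = ∫ x in Ioi 0, r * exp (-(r * x)) * f x := by
  rw [expMeasure_eq, integral_withDensity_eq_integral_smul (meas_pdf r) f]
  have h1 : (fun x => (exponentialPDFReal r x).toNNReal • f x)
      = fun x => (Ici (0:ℝ)).indicator (fun x => r * exp (-(r * x)) * f x) x := by
    ext x
    by_cases hx : 0 ≤ x
    · rw [indicator_of_mem (mem_Ici.mpr hx)]
      simp only [NNReal.smul_def, smul_eq_mul]
      rw [exponentialPDFReal_eq, if_pos hx, Real.coe_toNNReal _ (by positivity)]
    · rw [indicator_of_notMem (fun h => hx (mem_Ici.mp h))]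
      simp only [NNReal.smul_def, smul_eq_mul]
      rw [exponentialPDFReal_eq, if_neg hx]
      simp
  rw [h1, integral_indicator measurableSet_Ici, integral_Ici_eq_integral_Ioi]

lemma integrable_id_expMeasure {r : ℝ} (hr : 0 < r) :
    Integrable (fun x : ℝ => x) (expMeasure r) := by
  rw [expMeasure_eq]
  have hm : Measurable (fun x => ((exponentialPDFReal r x).toNNReal : ℝ≥0∞)) :=
    (meas_pdf r).coe_nnreal_ennreal
  rw [integrable_withDensity_iff hm (ae_of_all _ (fun x => ENNReal.coe_lt_top))]
  have h1 : (fun x : ℝ => x * ((((exponentialPDFReal r x).toNNReal : ℝ≥0∞)).toReal))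
      = fun x => (Ici (0:ℝ)).indicator (fun x => r * (x * exp (-(r * x)))) x := by
    ext x
    by_cases hx : 0 ≤ x
    · rw [indicator_of_mem (mem_Ici.mpr hx)]
      simp only [ENNReal.coe_toReal]
      rw [exponentialPDFReal_eq, if_pos hx, Real.coe_toNNReal _ (by positivity)]
      ring
    · rw [indicator_of_notMem (fun h => hx (mem_Ici.mp h))]
      simp only [ENNReal.coe_toReal]
      rw [exponentialPDFReal_eq, if_neg hx]
      simp
  rw [h1, integrable_indicator_iff measurableSet_Ici, integrableOn_Ici_iff_integrableOn_Ioi]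
  exact (integrableOn_id_mul_exp_neg_mul hr le_rfl).const_mul r

/-- The core Lebesgue-level identity. -/
lemma core {a b : ℝ} (ha : 0 < a) (hb : 0 < b) (hab : a ≠ b) :
    ∫ x in Ioi 0, a * exp (-(a * x)) * ∫ y in Ioi 0, b * exp (-(b * y)) * log (1 + x + y)
      = a * b / (b - a) *
        ((1 / a * exp a * ∫ t in Ioi a, exp (-t) / t)
          - 1 / b * exp b * ∫ t in Ioi b, exp (-t) / t) := by
  have hba : b - a ≠ 0 := sub_ne_zero_of_ne (Ne.symm hab)
  set φ : ℝ → ℝ := fun s => b * (log (1 + s) * exp (-(b * s))) with hφdef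
  have hφmeas : Measurable φ := (meas_log_mul_exp b).const_mul b
  have hφint : ∀ {u : ℝ}, 0 ≤ u → IntegrableOn φ (Ioi u) :=
    fun hu => (integrableOn_log_mul_exp hb hu).const_mul b
  have hφnonneg : ∀ s : ℝ, 0 ≤ s → 0 ≤ φ s := fun s hs =>
    mul_nonneg hb.le (mul_nonneg (log_nonneg' hs) (exp_pos _).le)
  set H : ℝ → ℝ := fun x => ∫ s in Ioi x, φ s with hHdef
  -- nonnegativity of H
  have hH_nonneg : ∀ x : ℝ, 0 ≤ x → 0 ≤ H x := by
    intro x hx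
    exact setIntegral_nonneg measurableSet_Ioi (fun s hs => hφnonneg s (le_trans hx hs.out.le))
  -- upper bound for H
  have hH_le : ∀ x : ℝ, 0 ≤ x → H x ≤ (x + 1 / b) * exp (-(b * x)) := by
    intro x hx
    have h1 : H x ≤ ∫ s in Ioi x, b * (s * exp (-(b * s))) := by
      refine setIntegral_mono_on (hφint hx)
        ((integrableOn_id_mul_exp_neg_mul hb hx).const_mul b) measurableSet_Ioi ?_
      intro s hs
      have hs0 : 0 ≤ s := le_trans hx hs.out.le
      exact mul_le_mul_of_nonneg_left
        (mul_le_mul_of_nonneg_right (log_le_self hs0) (exp_pos _).le) hb.le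
    calc H x ≤ ∫ s in Ioi x, b * (s * exp (-(b * s))) := h1
      _ = b * ((x / b + 1 / b ^ 2) * exp (-(b * x))) := by
          rw [integral_const_mul _ _, integral_id_mul_exp_neg_mul hb hx]
      _ = (x + 1 / b) * exp (-(b * x)) := by field_simp
  -- decomposition of H
  have hH_split : ∀ x : ℝ, 0 ≤ x → H 0 = (∫ s in (0:ℝ)..x, φ s) + H x := by
    intro x hx
    have hunion : Ioc (0:ℝ) x ∪ Ioi x = Ioi 0 := Ioc_union_Ioi_eq_Ioi hx
    have := setIntegral_union (Ioc_disjoint_Ioi le_rfl) measurableSet_Ioi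
      ((hφint le_rfl).mono_set Ioc_subset_Ioi_self) (hφint hx) (f := φ) (μ := volume)
    rw [hunion] at this
    rw [intervalIntegral.integral_of_le hx]
    simpa [hHdef] using this
  have hH_le_H0 : ∀ x : ℝ, 0 ≤ x → H x ≤ H 0 := by
    intro x hx
    have h0 : 0 ≤ ∫ s in (0:ℝ)..x, φ s := by
      rw [intervalIntegral.integral_of_le hx]
      exact setIntegral_nonneg measurableSet_Ioc (fun s hs => hφnonneg s hs.1.le)
    linarith [hH_split x hx]
  -- derivative of H
  have hH_deriv : ∀ x ∈ Ioi (0:ℝ), HasDerivAt H (-(φ x)) x := by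
    intro x hx
    have hx0 : (0:ℝ) < x := hx.out
    have hint : IntervalIntegrable φ volume 0 x := by
      rw [intervalIntegrable_iff_integrableOn_Ioc_of_le hx0.le]
      exact (hφint le_rfl).mono_set Ioc_subset_Ioi_self
    have hcont : ContinuousAt φ x := by
      refine ContinuousAt.mul continuousAt_const (ContinuousAt.mul ?_ (by fun_prop))
      exact (Real.continuousAt_log (by linarith)).comp (by fun_prop)
    have hder := intervalIntegral.integral_hasDerivAt_right hint
      (hφmeas.stronglyMeasurable.stronglyMeasurableAtFilter) hcont
    have hg : HasDerivAt (fun y => H 0 - ∫ s in (0:ℝ)..y, φ s) (-(φ x)) x := by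
      simpa using hder.const_sub (H 0)
    refine hg.congr_of_eventuallyEq ?_
    filter_upwards [isOpen_Ioi.mem_nhds hx] with y hy
    have := hH_split y hy.out.le
    linarith
  have hH_contOn : ContinuousOn H (Ioi 0) :=
    fun x hx => ((hH_deriv x hx).continuousAt).continuousWithinAt
  -- the function u for integration by parts
  set u : ℝ → ℝ := fun x => a / (b - a) * (exp ((b - a) * x) - 1) with hudef
  have hu_deriv : ∀ x ∈ Ioi (0:ℝ), HasDerivAt u (a * exp ((b - a) * x)) x := by
    intro x _
    have h1 : HasDerivAt (fun y : ℝ => exp ((b - a) * y)) ((b - a) * exp ((b - a) * x)) x := by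
      have : HasDerivAt (fun y : ℝ => (b - a) * y) (b - a) x := by
        simpa using (hasDerivAt_id x).const_mul (b - a)
      simpa [mul_comm] using this.exp
    have := ((h1.sub_const 1).const_mul (a / (b - a)))
    refine this.congr_deriv ?_
    field_simp
  have hu_cont : Continuous u := by fun_prop
  have hu_bound : ∀ x : ℝ, |u x| ≤ |a / (b - a)| * (exp ((b - a) * x) + 1) := by
    intro x
    rw [abs_mul]
    refine mul_le_mul_of_nonneg_left ?_ (abs_nonneg _)
    have he := exp_pos ((b - a) * x)
    exact abs_le.mpr ⟨by linarith, by linarith⟩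
  have hu_zero : u 0 = 0 := by simp [hudef]
  -- integrability of u * H'
  have habs_exp : ∀ x : ℝ, exp ((b - a) * x) * exp (-(b * x)) = exp (-(a * x)) := by
    intro x
    rw [← exp_add]
    congr 1
    ring
  have huv' : IntegrableOn (u * fun x => -(φ x)) (Ioi (0:ℝ)) := by
    have hg : IntegrableOn (fun x : ℝ =>
        |a / (b - a)| * b * (x * exp (-(a * x)) + x * exp (-(b * x)))) (Ioi 0) :=
      (((integrableOn_id_mul_exp_neg_mul ha le_rfl).add
        (integrableOn_id_mul_exp_neg_mul hb le_rfl)).const_mul _)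
    refine Integrable.mono hg ((hu_cont.measurable.mul hφmeas.neg).aestronglyMeasurable) ?_
    rw [ae_restrict_iff' measurableSet_Ioi]
    refine ae_of_all _ (fun x hx => ?_)
    have hx0 : (0:ℝ) ≤ x := hx.out.le
    simp only [Pi.mul_apply, Real.norm_eq_abs]
    rw [abs_mul, abs_neg]
    have h1 : |φ x| ≤ b * (x * exp (-(b * x))) := by
      rw [hφdef, abs_mul, abs_mul, abs_of_nonneg hb.le, abs_of_nonneg (log_nonneg' hx0),
        abs_of_nonneg (exp_pos _).le]
      exact mul_le_mul_of_nonneg_left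
        (mul_le_mul_of_nonneg_right (log_le_self hx0) (exp_pos _).le) hb.le
    have h2 := hu_bound x
    have h3 : |u x| * |φ x| ≤ (|a / (b - a)| * (exp ((b - a) * x) + 1)) * (b * (x * exp (-(b * x)))) :=
      mul_le_mul h2 h1 (abs_nonneg _) (by positivity)
    rw [abs_of_nonneg (by positivity : (0:ℝ) ≤ |a / (b - a)| * b * (x * exp (-(a * x)) + x * exp (-(b * x))))]
    calc |u x| * |φ x| ≤ (|a / (b - a)| * (exp ((b - a) * x) + 1)) * (b * (x * exp (-(b * x)))) := h3
      _ = |a / (b - a)| * b * (x * (exp ((b - a) * x) * exp (-(b * x))) + x * exp (-(b * x))) := by ring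
      _ = |a / (b - a)| * b * (x * exp (-(a * x)) + x * exp (-(b * x))) := by rw [habs_exp]
  -- integrability of u' * H
  have hu'v : IntegrableOn ((fun x => a * exp ((b - a) * x)) * H) (Ioi (0:ℝ)) := by
    have hg : IntegrableOn (fun x : ℝ =>
        a * (x * exp (-(a * x)) + 1 / b * exp (-(a * x)))) (Ioi 0) :=
      (((integrableOn_id_mul_exp_neg_mul ha le_rfl).add
        ((integrableOn_exp_neg_mul ha 0).const_mul (1/b))).const_mul a)
    have hm1 : AEStronglyMeasurable (fun x : ℝ => a * exp ((b - a) * x))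
        (volume.restrict (Ioi 0)) := Continuous.aestronglyMeasurable (by fun_prop)
    have hm2 : AEStronglyMeasurable H (volume.restrict (Ioi 0)) :=
      hH_contOn.aestronglyMeasurable measurableSet_Ioi
    refine Integrable.mono hg (hm1.mul hm2) ?_
    · rw [ae_restrict_iff' measurableSet_Ioi]
      refine ae_of_all _ (fun x hx => ?_)
      have hx0 : (0:ℝ) ≤ x := hx.out.le
      simp only [Pi.mul_apply, Real.norm_eq_abs]
      have hH0 := hH_nonneg x hx0
      rw [abs_mul, abs_of_nonneg (mul_nonneg ha.le (exp_pos _).le), abs_of_nonneg hH0,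
        abs_of_nonneg (by positivity : (0:ℝ) ≤ a * (x * exp (-(a * x)) + 1 / b * exp (-(a * x))))]
      calc a * exp ((b - a) * x) * H x
          ≤ a * exp ((b - a) * x) * ((x + 1 / b) * exp (-(b * x))) := by
            exact mul_le_mul_of_nonneg_left (hH_le x hx0) (by positivity)
        _ = a * ((x + 1 / b) * (exp ((b - a) * x) * exp (-(b * x)))) := by ring
        _ = a * ((x + 1 / b) * exp (-(a * x))) := by rw [habs_exp]
        _ = a * (x * exp (-(a * x)) + 1 / b * exp (-(a * x))) := by ring
  -- boundary limits
  have h_zero : Tendsto (u * H) (𝓝[>] (0:ℝ)) (𝓝 0) := by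
    have hcont : ContinuousAt (fun x : ℝ => |u x| * H 0) 0 :=
      ((hu_cont.abs).continuousAt).mul continuousAt_const
    have h0 : Tendsto (fun x : ℝ => |u x| * H 0) (𝓝[>] (0:ℝ)) (𝓝 (|u 0| * H 0)) :=
      hcont.tendsto.mono_left nhdsWithin_le_nhds
    have hgt : Tendsto (fun x : ℝ => |u x| * H 0) (𝓝[>] (0:ℝ)) (𝓝 0) := by
      simpa [hu_zero] using h0
    refine squeeze_zero_norm' ?_ hgt
    filter_upwards [self_mem_nhdsWithin] with x hx
    have hx0 : (0:ℝ) ≤ x := le_of_lt hx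
    simp only [Pi.mul_apply, Real.norm_eq_abs]
    rw [abs_mul, abs_of_nonneg (hH_nonneg x hx0)]
    exact mul_le_mul_of_nonneg_left (hH_le_H0 x hx0) (abs_nonneg _)
  have h_infty : Tendsto (u * H) atTop (𝓝 0) := by
    have hgt : Tendsto (fun x : ℝ => |a / (b - a)| *
        ((x * exp (-(a * x)) + 1 / b * exp (-(a * x))) +
         (x * exp (-(b * x)) + 1 / b * exp (-(b * x))))) atTop (𝓝 0) := by
      have t1 := (tendsto_id_mul_exp_neg_mul ha).add ((tendsto_exp_neg_mul ha).const_mul (1/b))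
      have t2 := (tendsto_id_mul_exp_neg_mul hb).add ((tendsto_exp_neg_mul hb).const_mul (1/b))
      have := (t1.add t2).const_mul (|a / (b - a)|)
      simpa using this
    refine squeeze_zero_norm' ?_ hgt
    filter_upwards [eventually_ge_atTop (0:ℝ)] with x hx0
    simp only [Pi.mul_apply, Real.norm_eq_abs]
    rw [abs_mul, abs_of_nonneg (hH_nonneg x hx0)]
    calc |u x| * H x ≤ (|a / (b - a)| * (exp ((b - a) * x) + 1)) * ((x + 1 / b) * exp (-(b * x))) :=
          mul_le_mul (hu_bound x) (hH_le x hx0) (hH_nonneg x hx0) (by positivity)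
      _ = |a / (b - a)| * ((x + 1/b) * (exp ((b - a) * x) * exp (-(b * x))) + (x + 1/b) * exp (-(b * x))) := by
          ring
      _ = |a / (b - a)| * ((x + 1/b) * exp (-(a * x)) + (x + 1/b) * exp (-(b * x))) := by rw [habs_exp]
      _ = |a / (b - a)| * ((x * exp (-(a * x)) + 1 / b * exp (-(a * x))) +
            (x * exp (-(b * x)) + 1 / b * exp (-(b * x)))) := by ring
  -- integration by parts
  have ibp := integral_Ioi_mul_deriv_eq_deriv_mul hu_deriv hH_deriv huv' hu'v h_zero h_infty
  -- ibp : ∫ u x * (-(φ x)) = 0 - 0 - ∫ (a * exp ((b-a)*x)) * H x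
  have key : ∫ x in Ioi (0:ℝ), a * exp ((b - a) * x) * H x = -∫ x in Ioi (0:ℝ), u x * (-(φ x)) := by
    rw [ibp]; ring
  -- rewrite LHS of the goal
  have inner_eq : ∀ x : ℝ, 0 < x →
      (∫ y in Ioi 0, b * exp (-(b * y)) * log (1 + x + y)) = exp (b * x) * H x := by
    intro x hx
    have h1 : (∫ y in Ioi (0:ℝ), b * exp (-(b * y)) * log (1 + x + y))
        = ∫ y in Ioi (0:ℝ), (fun s => b * exp (-(b * (s - x))) * log (1 + s)) (y + x) := by
      refine setIntegral_congr_fun measurableSet_Ioi (fun y _ => ?_)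
      simp only
      rw [show y + x - x = y by ring, show (1:ℝ) + (y + x) = 1 + x + y by ring]
    rw [h1, shift_Ioi (fun s => b * exp (-(b * (s - x))) * log (1 + s)) 0 x, zero_add]
    have h2 : ∀ s : ℝ, b * exp (-(b * (s - x))) * log (1 + s) = exp (b * x) * φ s := by
      intro s
      rw [hφdef]
      simp only
      rw [show -(b * (s - x)) = b * x + -(b * s) by ring, exp_add]
      ring
    calc (∫ s in Ioi x, b * exp (-(b * (s - x))) * log (1 + s))
        = ∫ s in Ioi x, exp (b * x) * φ s := by
          exact setIntegral_congr_fun measurableSet_Ioi (fun s _ => h2 s)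
      _ = exp (b * x) * H x := by rw [integral_const_mul _ _]
  have lhs_eq : ∫ x in Ioi 0, a * exp (-(a * x)) * ∫ y in Ioi 0, b * exp (-(b * y)) * log (1 + x + y)
      = ∫ x in Ioi (0:ℝ), a * exp ((b - a) * x) * H x := by
    refine setIntegral_congr_fun measurableSet_Ioi (fun x hx => ?_)
    rw [inner_eq x hx.out]
    rw [show (b - a) * x = b * x + -(a * x) by ring, exp_add]
    ring
  -- compute the right side
  have rhs_eq : ∫ x in Ioi (0:ℝ), u x * (-(φ x))
      = -(a * b / (b - a)) * ((∫ s in Ioi (0:ℝ), log (1 + s) * exp (-(a * s)))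
          - ∫ s in Ioi (0:ℝ), log (1 + s) * exp (-(b * s))) := by
    have hpt : ∀ x : ℝ, u x * (-(φ x))
        = -(a * b / (b - a)) * (log (1 + x) * exp (-(a * x)) - log (1 + x) * exp (-(b * x))) := by
      intro x
      rw [hudef, hφdef]
      simp only
      rw [← habs_exp x]
      field_simp
      try ring
      try tauto
    calc ∫ x in Ioi (0:ℝ), u x * (-(φ x))
        = ∫ x in Ioi (0:ℝ), -(a * b / (b - a)) *
            (log (1 + x) * exp (-(a * x)) - log (1 + x) * exp (-(b * x))) := by
          exact setIntegral_congr_fun measurableSet_Ioi (fun x _ => hpt x)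
      _ = -(a * b / (b - a)) * ∫ x in Ioi (0:ℝ),
            (log (1 + x) * exp (-(a * x)) - log (1 + x) * exp (-(b * x))) := by
          rw [integral_const_mul _ _]
      _ = _ := by
          rw [integral_sub (integrableOn_log_mul_exp ha le_rfl) (integrableOn_log_mul_exp hb le_rfl)]
  rw [lhs_eq, key, rhs_eq, integral_log_mul_exp ha, integral_log_mul_exp hb]
  ring

end ESSRAux

open ESSRAux
open Set Filter Topology

/-- The term `I₃` in the without-jamming ESSR: for independent exponential `X`, `Y` with
means `m_x ≠ m_y`,
`E[ln(1 + X + Y)] = (m_x/(m_x-m_y))·exp(1/m_x)·∫_{1/m_x}^∞ exp(-t)/t dt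
                  - (m_y/(m_x-m_y))·exp(1/m_y)·∫_{1/m_y}^∞ exp(-t)/t dt`. -/
theorem expectation_log_one_add_sum_exponentials
    {Ω : Type*} [MeasurableSpace Ω] (μ : Measure Ω) [IsProbabilityMeasure μ]
    (X Y : Ω → ℝ) (mx my : ℝ) (hmx : 0 < mx) (hmy : 0 < my) (hne : mx ≠ my)
    (hXm : Measurable X) (hYm : Measurable Y)
    (hX : Measure.map X μ = expMeasure (1 / mx))
    (hY : Measure.map Y μ = expMeasure (1 / my))
    (hindep : IndepFun X Y μ) :
    ∫ ω, Real.log (1 + X ω + Y ω) ∂μ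
      = mx / (mx - my) * Real.exp (1 / mx) * (∫ t in Set.Ioi (1 / mx), Real.exp (-t) / t)
        - my / (mx - my) * Real.exp (1 / my) * (∫ t in Set.Ioi (1 / my), Real.exp (-t) / t) := by
  have ha : (0:ℝ) < 1 / mx := by positivity
  have hb : (0:ℝ) < 1 / my := by positivity
  have hab : (1:ℝ) / mx ≠ 1 / my := by
    simp only [one_div]
    exact fun h => hne (inv_injective h)
  haveI hPa : IsProbabilityMeasure (expMeasure (1 / mx)) := isProbabilityMeasure_expMeasure ha
  haveI hPb : IsProbabilityMeasure (expMeasure (1 / my)) := isProbabilityMeasure_expMeasure hb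
  set Pa := expMeasure (1 / mx) with hPadef
  set Pb := expMeasure (1 / my) with hPbdef
  set f : ℝ × ℝ → ℝ := fun p => Real.log (1 + p.1 + p.2) with hfdef
  have hfmeas : Measurable f :=
    Real.measurable_log.comp ((measurable_const.add measurable_fst).add measurable_snd)
  -- map to the product measure
  have hmap : Measure.map (fun ω => (X ω, Y ω)) μ = Pa.prod Pb := by
    rw [(indepFun_iff_map_prod_eq_prod_map_map hXm.aemeasurable hYm.aemeasurable).mp hindep,
      hX, hY]
  have h1 : ∫ ω, Real.log (1 + X ω + Y ω) ∂μ = ∫ p, f p ∂(Pa.prod Pb) := by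
    rw [← hmap, integral_map (hXm.prodMk hYm).aemeasurable hfmeas.aestronglyMeasurable]
  -- a.e. nonnegativity of coordinates
  have haeprod : ∀ᵐ p : ℝ × ℝ ∂(Pa.prod Pb), 0 ≤ p.1 ∧ 0 ≤ p.2 := by
    rw [ae_iff]
    have hsub : {p : ℝ × ℝ | ¬(0 ≤ p.1 ∧ 0 ≤ p.2)} ⊆ (Iio 0 ×ˢ univ) ∪ (univ ×ˢ Iio 0) := by
      intro p hp
      simp only [mem_setOf_eq, not_and_or, not_le] at hp
      rcases hp with h | h
      · exact Or.inl ⟨h, mem_univ _⟩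
      · exact Or.inr ⟨mem_univ _, h⟩
    refine measure_mono_null hsub (measure_union_null ?_ ?_)
    · rw [Measure.prod_prod, hPadef, expMeasure_Iio_zero]; simp
    · rw [Measure.prod_prod, hPbdef, expMeasure_Iio_zero]; simp
  -- integrability
  have hfst : Integrable (fun p : ℝ × ℝ => p.1) (Pa.prod Pb) := by
    refine (integrable_prod_iff measurable_fst.aestronglyMeasurable).mpr ⟨?_, ?_⟩
    · refine ae_of_all _ (fun x => ?_)
      have hconst : Integrable (fun _ : ℝ => x) Pb := integrable_const x
      simpa using hconst
    · simp only [norm_eq_abs, integral_const, measure_univ, ENNReal.toReal_one, probReal_univ, one_smul]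
      exact (integrable_id_expMeasure ha).abs
  have hsnd : Integrable (fun p : ℝ × ℝ => p.2) (Pa.prod Pb) := by
    refine (integrable_prod_iff measurable_snd.aestronglyMeasurable).mpr ⟨?_, ?_⟩
    · exact ae_of_all _ (fun _ => integrable_id_expMeasure hb)
    · have hC : Integrable (fun _ : ℝ => ∫ y : ℝ, ‖y‖ ∂Pb) Pa := integrable_const _
      exact hC
  have hf_int : Integrable f (Pa.prod Pb) := by
    refine Integrable.mono' (hfst.add hsnd) hfmeas.aestronglyMeasurable ?_
    filter_upwards [haeprod] with p hp
    have hs : (0:ℝ) ≤ p.1 + p.2 := add_nonneg hp.1 hp.2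
    have h2 : f p = Real.log (1 + (p.1 + p.2)) := by rw [hfdef]; ring_nf
    rw [Real.norm_eq_abs, h2, abs_of_nonneg (log_nonneg' hs)]
    exact log_le_self hs
  -- Fubini
  have h3 : ∫ p, f p ∂(Pa.prod Pb) = ∫ x, (∫ y, f (x, y) ∂Pb) ∂Pa := integral_prod f hf_int
  have h4 : (fun x : ℝ => ∫ y, f (x, y) ∂Pb)
      = fun x : ℝ => ∫ y in Ioi 0, 1 / my * exp (-(1 / my * y)) * Real.log (1 + x + y) := by
    ext x
    rw [hPbdef, integral_expMeasure hb (fun y => f (x, y))]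
  have h5 : ∫ x, (∫ y in Ioi 0, 1 / my * exp (-(1 / my * y)) * Real.log (1 + x + y)) ∂Pa
      = ∫ x in Ioi 0, 1 / mx * exp (-(1 / mx * x)) *
          ∫ y in Ioi 0, 1 / my * exp (-(1 / my * y)) * Real.log (1 + x + y) := by
    rw [hPadef, integral_expMeasure ha]
  rw [h1, h3, h4, h5, core ha hb hab]
  have hmx0 : mx ≠ 0 := hmx.ne'
  have hmy0 : my ≠ 0 := hmy.ne'
  have hd : mx - my ≠ 0 := sub_ne_zero_of_ne hne
  have hba : 1 / my - 1 / mx ≠ 0 := by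
    intro h
    apply hab
    linarith [sub_eq_zero.mp h]
  generalize (∫ t in Ioi (1 / mx), exp (-t) / t) = Ea
  generalize (∫ t in Ioi (1 / my), exp (-t) / t) = Eb
  field_simp
end

section
/- Let X, Y, Z, W, U be mutually independent exponentially distributed random variables with means m_x, m_y, m_z, m_w, m_u > 0, and let P₁, P₂ > 0 be constants with P₁·m_x ≠ P₂·m_y. Then E[ (P₁·Z + P₂·W)·U / (P₁·X + P₂·Y) ] = m_u·(P₁·m_z + P₂·m_w) · ln( (P₁·m_x)/(P₂·m_y) ) / (P₁·m_x − P₂·m_y). -/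
open MeasureTheory ProbabilityTheory Real
open scoped ENNReal NNReal
open Set Filter Topology

namespace JamAux

/-- expMeasure gives no mass to the nonpositive reals. -/
lemma expMeasure_Iic_zero (r : ℝ) : expMeasure r (Set.Iic 0) = 0 := by
  have hdef : expMeasure r = volume.withDensity (exponentialPDF r) := rfl
  have h1 : expMeasure r (Set.Iio 0) = 0 := by
    rw [hdef, withDensity_apply _ measurableSet_Iio]
    simpa using lintegral_exponentialPDF_of_nonpos (le_refl (0:ℝ)) (r := r)
  have h2 : expMeasure r {(0:ℝ)} = 0 := by
    have : volume ({(0:ℝ)} : Set ℝ) = 0 := by simp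
    exact (withDensity_absolutelyContinuous volume (exponentialPDF r)) this
  have : Set.Iic (0:ℝ) = Set.Iio 0 ∪ {0} := by
    ext x; simp [le_iff_lt_or_eq]
  rw [this]
  exact le_antisymm (le_trans (measure_union_le _ _) (by simp [h1, h2])) zero_le

lemma expMeasure_ae_pos (r : ℝ) : ∀ᵐ x ∂(expMeasure r), 0 < x := by
  rw [ae_iff]
  convert expMeasure_Iic_zero r using 2
  ext x; simp

/-- Reduce a lintegral against expMeasure to a lintegral on `Ioi 0` against the density. -/
lemma lintegral_expMeasure (r : ℝ) {g : ℝ → ℝ≥0∞} (hg : Measurable g) :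
    ∫⁻ x, g x ∂(expMeasure r)
      = ∫⁻ x in Set.Ioi 0, ENNReal.ofReal (r * Real.exp (-(r * x))) * g x := by
  have hdef : expMeasure r = volume.withDensity (exponentialPDF r) := rfl
  have hpdf : Measurable (exponentialPDF r) :=
    (measurable_exponentialPDFReal r).ennreal_ofReal
  rw [hdef, lintegral_withDensity_eq_lintegral_mul _ hpdf hg]
  rw [← lintegral_add_compl (fun x => (exponentialPDF r * g) x)
      (measurableSet_Ioi : MeasurableSet (Set.Ioi (0:ℝ)))]
  have hcompl : (Set.Ioi (0:ℝ))ᶜ = Set.Iic 0 := by ext x; simp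
  have h2 : ∫⁻ x in (Set.Ioi (0:ℝ))ᶜ, (exponentialPDF r * g) x = 0 := by
    rw [hcompl]
    have hne : ∀ᵐ (x:ℝ) ∂(volume.restrict (Set.Iic 0)), x ≠ 0 := by
      refine ae_restrict_of_ae ?_
      rw [ae_iff]
      simpa using (by simp : volume ({(0:ℝ)} : Set ℝ) = 0)
    have h0 : ∀ᵐ x ∂(volume.restrict (Set.Iic 0)), (exponentialPDF r * g) x = 0 := by
      filter_upwards [ae_restrict_mem measurableSet_Iic, hne] with x hx hx0
      have : x < 0 := lt_of_le_of_ne hx hx0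
      simp [Pi.mul_apply, exponentialPDF_of_neg this]
    rw [lintegral_congr_ae h0, lintegral_zero]
  rw [h2, add_zero]
  refine setLIntegral_congr_fun measurableSet_Ioi (fun x hx => ?_)
  simp [Pi.mul_apply, exponentialPDF_of_nonneg (le_of_lt hx)]
lemma integral_exp_neg_mul_Ioi {c : ℝ} (hc : 0 < c) :
    ∫ t in Set.Ioi (0:ℝ), Real.exp (-(c * t)) = c⁻¹ := by
  have h := integral_rpow_mul_exp_neg_mul_Ioi (ha := zero_lt_one) (hr := hc)
  simp only [sub_self, Real.rpow_zero, one_mul, Real.rpow_one, Real.Gamma_one, mul_one] at h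
  rw [h, one_div]

lemma integrableOn_exp_neg_mul {c : ℝ} (hc : 0 < c) :
    IntegrableOn (fun t => Real.exp (-(c * t))) (Set.Ioi (0:ℝ)) := by
  simpa [neg_mul] using exp_neg_integrableOn_Ioi (0:ℝ) hc

lemma lintegral_exp_neg_mul_Ioi {c : ℝ} (hc : 0 < c) :
    ∫⁻ t in Set.Ioi (0:ℝ), ENNReal.ofReal (Real.exp (-(c * t))) = ENNReal.ofReal c⁻¹ := by
  rw [← ofReal_integral_eq_lintegral_ofReal (integrableOn_exp_neg_mul hc)
    (ae_of_all _ fun t => (Real.exp_pos _).le), integral_exp_neg_mul_Ioi hc]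

lemma lintegral_id_mul_exp_neg_mul_Ioi {c : ℝ} (hc : 0 < c) :
    ∫⁻ t in Set.Ioi (0:ℝ), ENNReal.ofReal (c * Real.exp (-(c * t)) * t)
      = ENNReal.ofReal c⁻¹ := by
  -- via FTC: antiderivative g t = -(t + 1/c) * exp (-(c*t))
  have hderiv : ∀ t ∈ Set.Ici (0:ℝ),
      HasDerivAt (fun t => -(t + c⁻¹) * Real.exp (-(c * t)))
        (c * Real.exp (-(c * t)) * t) t := by
    intro t _
    have h1 : HasDerivAt (fun t : ℝ => -(t + c⁻¹)) (-1) t := by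
      exact ((hasDerivAt_id t).add_const c⁻¹).neg
    have h2 : HasDerivAt (fun t : ℝ => Real.exp (-(c * t))) (-c * Real.exp (-(c * t))) t := by
      have : HasDerivAt (fun t : ℝ => -(c * t)) (-c) t := by
        exact (((hasDerivAt_id t).const_mul c).neg).congr_deriv (by ring)
      have h3 := this.exp
      convert h3 using 1
      ring
    have := h1.mul h2
    refine this.congr_deriv ?_
    linear_combination (Real.exp (-(c * t))) * mul_inv_cancel₀ hc.ne'
  have hpos : ∀ t ∈ Set.Ioi (0:ℝ), 0 ≤ c * Real.exp (-(c * t)) * t := by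
    intro t ht
    exact mul_nonneg (mul_nonneg hc.le (Real.exp_pos _).le) (le_of_lt ht)
  have htend : Tendsto (fun t => -(t + c⁻¹) * Real.exp (-(c * t))) atTop (𝓝 0) := by
    have h1 : Tendsto (fun t : ℝ => t * Real.exp (-c * t)) atTop (𝓝 0) := by
      have := tendsto_rpow_mul_exp_neg_mul_atTop_nhds_zero 1 c hc
      refine this.congr' ?_
      filter_upwards [eventually_gt_atTop (0:ℝ)] with t ht
      rw [Real.rpow_one]
    have h2 : Tendsto (fun t : ℝ => Real.exp (-c * t)) atTop (𝓝 0) := by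
      have : Tendsto (fun t : ℝ => -c * t) atTop atBot :=
        tendsto_id.const_mul_atTop_of_neg (neg_lt_zero.mpr hc)
      exact Real.tendsto_exp_atBot.comp this
    have := (h1.add (h2.const_mul c⁻¹)).neg
    simp only [neg_add, add_zero, neg_zero, mul_zero, zero_add] at this
    refine this.congr fun t => ?_
    simp only [neg_mul]
    ring_nf
  have hval := integral_Ioi_of_hasDerivAt_of_nonneg' hderiv hpos htend
  have hint := integrableOn_Ioi_deriv_of_nonneg' hderiv hpos htend
  rw [← ofReal_integral_eq_lintegral_ofReal hint
    (by filter_upwards [ae_restrict_mem measurableSet_Ioi] with t ht; exact hpos t ht)]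
  rw [hval]; norm_num


/-- Laplace transform of the exponential distribution. -/
lemma laplace_expMeasure {r s : ℝ} (hr : 0 < r) (hs : 0 ≤ s) :
    ∫⁻ x, ENNReal.ofReal (Real.exp (-(s * x))) ∂(expMeasure r)
      = ENNReal.ofReal (r / (r + s)) := by
  rw [lintegral_expMeasure r (by fun_prop)]
  have key : ∀ x ∈ Set.Ioi (0:ℝ),
      ENNReal.ofReal (r * Real.exp (-(r * x))) * ENNReal.ofReal (Real.exp (-(s * x)))
        = ENNReal.ofReal (r * Real.exp (-((r + s) * x))) := by
    intro x _
    rw [← ENNReal.ofReal_mul (by positivity)]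
    congr 1
    rw [mul_assoc, ← Real.exp_add]
    ring_nf
  rw [setLIntegral_congr_fun measurableSet_Ioi key]
  have hrs : 0 < r + s := by linarith
  have hint : IntegrableOn (fun x => r * Real.exp (-((r + s) * x))) (Set.Ioi (0:ℝ)) :=
    (integrableOn_exp_neg_mul hrs).const_mul r
  rw [← ofReal_integral_eq_lintegral_ofReal hint
    (ae_of_all _ fun x => by positivity)]
  rw [MeasureTheory.integral_const_mul, integral_exp_neg_mul_Ioi hrs]
  rw [div_eq_mul_inv]

/-- Mean of the exponential distribution, lintegral form. -/
lemma lintegral_id_expMeasure {r : ℝ} (hr : 0 < r) :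
    ∫⁻ x, ENNReal.ofReal x ∂(expMeasure r) = ENNReal.ofReal r⁻¹ := by
  rw [lintegral_expMeasure r (by measurability)]
  rw [← lintegral_id_mul_exp_neg_mul_Ioi hr]
  refine setLIntegral_congr_fun measurableSet_Ioi (fun x hx => ?_)
  rw [← ENNReal.ofReal_mul (by positivity)]

lemma integrable_id_expMeasure {r : ℝ} (hr : 0 < r) :
    Integrable (fun x : ℝ => x) (expMeasure r) := by
  refine ⟨aestronglyMeasurable_id, ?_⟩
  rw [hasFiniteIntegral_iff_ofReal (by filter_upwards [expMeasure_ae_pos r] with x hx; exact hx.le)]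
  rw [lintegral_id_expMeasure hr]
  exact ENNReal.ofReal_lt_top

lemma integral_id_expMeasure {r : ℝ} (hr : 0 < r) :
    ∫ x, x ∂(expMeasure r) = r⁻¹ := by
  rw [MeasureTheory.integral_eq_lintegral_of_nonneg_ae (f := fun x : ℝ => x)
    (by filter_upwards [expMeasure_ae_pos r] with x hx; exact hx.le) aestronglyMeasurable_id]
  rw [lintegral_id_expMeasure hr, ENNReal.toReal_ofReal (by positivity)]


section PartialFractions

variable {α β : ℝ}

lemma pf_deriv (hα : 0 < α) (hβ : 0 < β) (hne : α ≠ β) :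
    ∀ t ∈ Set.Ici (0:ℝ),
      HasDerivAt (fun t => (Real.log (1 + α * t) - Real.log (1 + β * t)) / (α - β))
        (((1 + α * t) * (1 + β * t))⁻¹) t := by
  intro t ht
  have h1 : (0:ℝ) < 1 + α * t := by nlinarith [ht.out]
  have h2 : (0:ℝ) < 1 + β * t := by nlinarith [ht.out]
  have d1 : HasDerivAt (fun t : ℝ => 1 + α * t) α t := by
    simpa using ((hasDerivAt_id t).const_mul α).const_add 1
  have d2 : HasDerivAt (fun t : ℝ => 1 + β * t) β t := by
    simpa using ((hasDerivAt_id t).const_mul β).const_add 1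
  have l1 : HasDerivAt (fun t : ℝ => Real.log (1 + α * t)) (α / (1 + α * t)) t :=
    by have := (Real.hasDerivAt_log h1.ne').comp t d1; exact this.congr_deriv (by ring)
  have l2 : HasDerivAt (fun t : ℝ => Real.log (1 + β * t)) (β / (1 + β * t)) t :=
    by have := (Real.hasDerivAt_log h2.ne').comp t d2; exact this.congr_deriv (by ring)
  have := (l1.sub l2).div_const (α - β)
  refine this.congr_deriv ?_
  have hαβ : α - β ≠ 0 := sub_ne_zero.mpr hne
  rw [div_sub_div _ _ h1.ne' h2.ne', div_div, inv_eq_one_div,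
    div_eq_div_iff (mul_ne_zero (mul_ne_zero h1.ne' h2.ne') hαβ) (mul_ne_zero h1.ne' h2.ne')]
  ring

lemma pf_tendsto (hα : 0 < α) (hβ : 0 < β) :
    Tendsto (fun t => (Real.log (1 + α * t) - Real.log (1 + β * t)) / (α - β)) atTop
      (𝓝 (Real.log (α / β) / (α - β))) := by
  have hratio : Tendsto (fun t : ℝ => (1 + α * t) / (1 + β * t)) atTop (𝓝 (α / β)) := by
    have h1 : Tendsto (fun t : ℝ => (t⁻¹ + α) / (t⁻¹ + β)) atTop (𝓝 (α / β)) := by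
      have ha : Tendsto (fun t : ℝ => t⁻¹ + α) atTop (𝓝 (0 + α)) :=
        tendsto_inv_atTop_zero.add tendsto_const_nhds
      have hb : Tendsto (fun t : ℝ => t⁻¹ + β) atTop (𝓝 (0 + β)) :=
        tendsto_inv_atTop_zero.add tendsto_const_nhds
      rw [zero_add] at ha hb
      exact ha.div hb hβ.ne'
    refine h1.congr' ?_
    filter_upwards [eventually_gt_atTop (0:ℝ)] with t ht
    rw [div_eq_div_iff (by positivity) (by nlinarith)]
    field_simp
  have hlog : Tendsto (fun t : ℝ => Real.log ((1 + α * t) / (1 + β * t))) atTop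
      (𝓝 (Real.log (α / β))) :=
    (Real.continuousAt_log (by positivity)).tendsto.comp hratio
  have := hlog.div_const (α - β)
  refine this.congr' ?_
  filter_upwards [eventually_ge_atTop (0:ℝ)] with t ht
  rw [Real.log_div (by nlinarith) (by nlinarith)]

lemma pf_cont (hα : 0 < α) (hβ : 0 < β) :
    ContinuousWithinAt (fun t => (Real.log (1 + α * t) - Real.log (1 + β * t)) / (α - β))
      (Set.Ici (0:ℝ)) 0 := by
  apply ContinuousAt.continuousWithinAt
  have c1 : ContinuousAt (fun t : ℝ => 1 + α * t) 0 := by fun_prop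
  have c2 : ContinuousAt (fun t : ℝ => 1 + β * t) 0 := by fun_prop
  exact ((c1.log (by norm_num)).sub (c2.log (by norm_num))).div_const _

lemma pf_nonneg (hα : 0 < α) (hβ : 0 < β) :
    ∀ t ∈ Set.Ioi (0:ℝ), 0 ≤ ((1 + α * t) * (1 + β * t))⁻¹ := by
  intro t ht
  have := ht.out
  positivity

lemma pf_integral (hα : 0 < α) (hβ : 0 < β) (hne : α ≠ β) :
    ∫ t in Set.Ioi (0:ℝ), ((1 + α * t) * (1 + β * t))⁻¹
      = Real.log (α / β) / (α - β) := by
  have := integral_Ioi_of_hasDerivAt_of_nonneg' (pf_deriv hα hβ hne)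
    (pf_nonneg hα hβ) (pf_tendsto hα hβ)
  simpa using this

lemma pf_integrableOn (hα : 0 < α) (hβ : 0 < β) (hne : α ≠ β) :
    IntegrableOn (fun t => ((1 + α * t) * (1 + β * t))⁻¹) (Set.Ioi (0:ℝ)) :=
  integrableOn_Ioi_deriv_of_nonneg' (pf_deriv hα hβ hne) (pf_nonneg hα hβ) (pf_tendsto hα hβ)

lemma pf_value_nonneg (hα : 0 < α) (hβ : 0 < β) (hne : α ≠ β) :
    0 ≤ Real.log (α / β) / (α - β) := by
  rcases lt_or_gt_of_ne hne with h | h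
  · rw [div_nonneg_iff]
    right
    constructor
    · exact Real.log_nonpos (by positivity) ((div_le_one hβ).mpr h.le)
    · linarith
  · apply div_nonneg
    · exact Real.log_nonneg ((one_le_div hβ).mpr h.le)
    · linarith

end PartialFractions


lemma prod_expMeasure_ae_pos {r1 r2 : ℝ} (h1 : 0 < r1) (h2 : 0 < r2) :
    ∀ᵐ p : ℝ × ℝ ∂((expMeasure r1).prod (expMeasure r2)), 0 < p.1 ∧ 0 < p.2 := by
  haveI := isProbabilityMeasure_expMeasure h1
  haveI := isProbabilityMeasure_expMeasure h2
  rw [ae_iff]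
  have hsub : {p : ℝ × ℝ | ¬(0 < p.1 ∧ 0 < p.2)}
      ⊆ (Set.Iic 0 ×ˢ (Set.univ : Set ℝ)) ∪ ((Set.univ : Set ℝ) ×ˢ Set.Iic 0) := by
    intro p hp
    simp only [Set.mem_setOf_eq, not_and_or, not_lt] at hp
    rcases hp with h | h
    · exact Or.inl ⟨h, Set.mem_univ _⟩
    · exact Or.inr ⟨Set.mem_univ _, h⟩
  refine measure_mono_null hsub (measure_union_null ?_ ?_)
  · rw [Measure.prod_prod, expMeasure_Iic_zero, zero_mul]
  · rw [Measure.prod_prod, expMeasure_Iic_zero, mul_zero]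

/-- The key computation: expectation of `(a·X + b·Y)⁻¹` for independent exponentials. -/
lemma lintegral_inv_prod {mx my a b : ℝ} (hmx : 0 < mx) (hmy : 0 < my)
    (ha : 0 < a) (hb : 0 < b) (hne : a * mx ≠ b * my) :
    ∫⁻ p : ℝ × ℝ, ENNReal.ofReal ((a * p.1 + b * p.2)⁻¹)
        ∂((expMeasure (1/mx)).prod (expMeasure (1/my)))
      = ENNReal.ofReal (Real.log ((a * mx) / (b * my)) / (a * mx - b * my)) := by
  have hrx : (0:ℝ) < 1/mx := by positivity
  have hry : (0:ℝ) < 1/my := by positivity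
  haveI := isProbabilityMeasure_expMeasure hrx
  haveI := isProbabilityMeasure_expMeasure hry
  set μ1 := expMeasure (1/mx) with hμ1
  set μ2 := expMeasure (1/my) with hμ2
  set ρ := μ1.prod μ2 with hρ
  -- a.e. positivity of both coordinates
  have hae : ∀ᵐ p : ℝ × ℝ ∂ρ, 0 < p.1 ∧ 0 < p.2 := prod_expMeasure_ae_pos hrx hry
  -- Step A: Frullani-style representation
  have stepA : ∫⁻ p : ℝ × ℝ, ENNReal.ofReal ((a * p.1 + b * p.2)⁻¹) ∂ρ
      = ∫⁻ p : ℝ × ℝ, (∫⁻ t in Set.Ioi (0:ℝ),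
          ENNReal.ofReal (Real.exp (-((a * p.1 + b * p.2) * t)))) ∂ρ := by
    refine lintegral_congr_ae ?_
    filter_upwards [hae] with p hp
    have hc : (0:ℝ) < a * p.1 + b * p.2 := by nlinarith [hp.1, hp.2]
    rw [lintegral_exp_neg_mul_Ioi hc]
  -- Step B: swap order
  have hm : Measurable (fun q : (ℝ × ℝ) × ℝ =>
      ENNReal.ofReal (Real.exp (-((a * q.1.1 + b * q.1.2) * q.2)))) := by
    apply Measurable.ennreal_ofReal
    fun_prop
  have stepB : ∫⁻ p : ℝ × ℝ, (∫⁻ t in Set.Ioi (0:ℝ),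
        ENNReal.ofReal (Real.exp (-((a * p.1 + b * p.2) * t)))) ∂ρ
      = ∫⁻ t in Set.Ioi (0:ℝ), ∫⁻ p : ℝ × ℝ,
          ENNReal.ofReal (Real.exp (-((a * p.1 + b * p.2) * t))) ∂ρ :=
    lintegral_lintegral_swap hm.aemeasurable
  -- Step C: inner integral via the Laplace transform
  have stepC : ∀ t ∈ Set.Ioi (0:ℝ),
      ∫⁻ p : ℝ × ℝ, ENNReal.ofReal (Real.exp (-((a * p.1 + b * p.2) * t))) ∂ρ
        = ENNReal.ofReal (((1 + (a * mx) * t) * (1 + (b * my) * t))⁻¹) := by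
    intro t ht
    have ht' : (0:ℝ) < t := ht
    have hsplit : ∀ p : ℝ × ℝ,
        ENNReal.ofReal (Real.exp (-((a * p.1 + b * p.2) * t)))
          = ENNReal.ofReal (Real.exp (-((t * a) * p.1)))
            * ENNReal.ofReal (Real.exp (-((t * b) * p.2))) := by
      intro p
      rw [← ENNReal.ofReal_mul (Real.exp_pos _).le, ← Real.exp_add]
      congr 2
      ring
    rw [lintegral_congr fun p => hsplit p, hρ]
    rw [lintegral_prod_mul (f := fun x => ENNReal.ofReal (Real.exp (-((t * a) * x))))
      (g := fun y => ENNReal.ofReal (Real.exp (-((t * b) * y)))) (by fun_prop) (by fun_prop)]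
    rw [hμ1, hμ2, laplace_expMeasure hrx (by positivity), laplace_expMeasure hry (by positivity)]
    rw [← ENNReal.ofReal_mul (by positivity)]
    congr 1
    have hd1 : (0:ℝ) < 1/mx + t * a := by positivity
    have hd2 : (0:ℝ) < 1/my + t * b := by positivity
    have e1 : (1/mx) / (1/mx + t * a) = (1 + (a * mx) * t)⁻¹ := by
      rw [div_eq_iff hd1.ne', inv_eq_one_div, div_mul_eq_mul_div, eq_div_iff (by positivity)]
      field_simp
    have e2 : (1/my) / (1/my + t * b) = (1 + (b * my) * t)⁻¹ := by
      rw [div_eq_iff hd2.ne', inv_eq_one_div, div_mul_eq_mul_div, eq_div_iff (by positivity)]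
      field_simp
    rw [e1, e2, mul_inv]
  -- Step D: the remaining one-dimensional integral
  rw [stepA, stepB, setLIntegral_congr_fun measurableSet_Ioi stepC]
  have hα : (0:ℝ) < a * mx := by positivity
  have hβ : (0:ℝ) < b * my := by positivity
  rw [← ofReal_integral_eq_lintegral_ofReal (pf_integrableOn hα hβ hne)
    (by filter_upwards [ae_restrict_mem measurableSet_Ioi] with t ht
        exact pf_nonneg hα hβ t ht)]
  rw [pf_integral hα hβ hne]

end JamAux

open JamAux

/-- The expectation appearing in the term `𝒦₂` of the friendly-jamming lower bound:
for mutually independent exponential `X, Y, Z, W, U` with means `m_x, m_y, m_z, m_w, m_u`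
and constants `P₁, P₂ > 0` with `P₁·m_x ≠ P₂·m_y`,
`E[(P₁·Z + P₂·W)·U/(P₁·X + P₂·Y)]
  = m_u·(P₁·m_z + P₂·m_w)·ln((P₁·m_x)/(P₂·m_y))/(P₁·m_x - P₂·m_y)`. -/
theorem expectation_jamming_ratio
    {Ω : Type*} [MeasurableSpace Ω] (μ : Measure Ω) [IsProbabilityMeasure μ]
    (X Y Z W U : Ω → ℝ) (mx my mz mw mu P1 P2 : ℝ)
    (hmx : 0 < mx) (hmy : 0 < my) (hmz : 0 < mz) (hmw : 0 < mw) (hmu : 0 < mu)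
    (hP1 : 0 < P1) (hP2 : 0 < P2) (hne : P1 * mx ≠ P2 * my)
    (hXm : Measurable X) (hYm : Measurable Y) (hZm : Measurable Z)
    (hWm : Measurable W) (hUm : Measurable U)
    (hX : Measure.map X μ = expMeasure (1 / mx))
    (hY : Measure.map Y μ = expMeasure (1 / my))
    (hZ : Measure.map Z μ = expMeasure (1 / mz))
    (hW : Measure.map W μ = expMeasure (1 / mw))
    (hU : Measure.map U μ = expMeasure (1 / mu))
    (hindep : iIndepFun ![X, Y, Z, W, U] μ) :
    ∫ ω, (P1 * Z ω + P2 * W ω) * U ω / (P1 * X ω + P2 * Y ω) ∂μ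
      = mu * (P1 * mz + P2 * mw) * Real.log (P1 * mx / (P2 * my)) / (P1 * mx - P2 * my) := by
  classical
  have hmeas : ∀ i, Measurable (![X, Y, Z, W, U] i) := by
    intro i
    fin_cases i <;> assumption
  -- independence of (Z, W) from U
  have h34 : IndepFun (fun ω => (Z ω, W ω)) U μ := by
    have h := hindep.indepFun_prodMk hmeas 2 3 4 (by decide) (by decide)
    exact h
  have hVU : IndepFun (fun ω => P1 * Z ω + P2 * W ω) U μ :=
    h34.comp (show Measurable fun p : ℝ × ℝ => P1 * p.1 + P2 * p.2 by fun_prop) measurable_id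
  -- independence of the numerator from the denominator
  have hST := hindep.indepFun_finset {2, 3, 4} {0, 1} (by decide) hmeas
  have hφ1 : Measurable (fun v : (({2, 3, 4} : Finset (Fin 5)) → ℝ) =>
      (P1 * v ⟨2, by decide⟩ + P2 * v ⟨3, by decide⟩) * v ⟨4, by decide⟩) := by
    fun_prop
  have hφ2 : Measurable (fun v : (({0, 1} : Finset (Fin 5)) → ℝ) =>
      (P1 * v ⟨0, by decide⟩ + P2 * v ⟨1, by decide⟩)⁻¹) := by
    fun_prop
  have hAB : IndepFun (fun ω => (P1 * Z ω + P2 * W ω) * U ω)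
      (fun ω => (P1 * X ω + P2 * Y ω)⁻¹) μ := hST.comp hφ1 hφ2
  -- measurability facts
  have hnum : Measurable fun ω => (P1 * Z ω + P2 * W ω) * U ω := by fun_prop
  have hden : Measurable fun ω => (P1 * X ω + P2 * Y ω)⁻¹ := by fun_prop
  -- expectations of the exponential variables
  have hint : ∀ (V : Ω → ℝ) (m : ℝ), 0 < m → Measurable V →
      Measure.map V μ = expMeasure (1 / m) → Integrable V μ ∧ ∫ ω, V ω ∂μ = m := by
    intro V m hm hVmeas hmap
    have h0 : (0:ℝ) < 1 / m := by positivity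
    constructor
    · have h1 : Integrable (fun x : ℝ => x) (Measure.map V μ) := by
        rw [hmap]; exact integrable_id_expMeasure h0
      have := (integrable_map_measure aestronglyMeasurable_id hVmeas.aemeasurable).mp h1
      simpa [Function.comp] using this
    · have h2 : ∫ x, (fun x : ℝ => x) x ∂(Measure.map V μ) = ∫ ω, V ω ∂μ :=
        integral_map hVmeas.aemeasurable aestronglyMeasurable_id
      simp only at h2
      rw [← h2, hmap, integral_id_expMeasure h0, one_div, inv_inv]
  obtain ⟨hIZ, hEZ⟩ := hint Z mz hmz hZm hZ
  obtain ⟨hIW, hEW⟩ := hint W mw hmw hWm hW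
  obtain ⟨_, hEU⟩ := hint U mu hmu hUm hU
  -- expectation of the inverse denominator
  have hXY : IndepFun X Y μ := hindep.indepFun (show (0 : Fin 5) ≠ 1 by decide)
  have hmap : μ.map (fun ω => (X ω, Y ω)) = (expMeasure (1/mx)).prod (expMeasure (1/my)) := by
    rw [← hX, ← hY]
    exact (indepFun_iff_map_prod_eq_prod_map_map hXm.aemeasurable hYm.aemeasurable).mp hXY
  have hα : (0:ℝ) < P1 * mx := by positivity
  have hβ : (0:ℝ) < P2 * my := by positivity
  have hEB : ∫ ω, (P1 * X ω + P2 * Y ω)⁻¹ ∂μ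
      = Real.log (P1 * mx / (P2 * my)) / (P1 * mx - P2 * my) := by
    have h1 : ∫ ω, (P1 * X ω + P2 * Y ω)⁻¹ ∂μ
        = ∫ p : ℝ × ℝ, (P1 * p.1 + P2 * p.2)⁻¹ ∂(μ.map (fun ω => (X ω, Y ω))) := by
      rw [integral_map (hXm.aemeasurable.prodMk hYm.aemeasurable)
        (Measurable.aestronglyMeasurable (by fun_prop))]
    rw [h1, hmap]
    have hx0 : (0:ℝ) < 1/mx := by positivity
    have hy0 : (0:ℝ) < 1/my := by positivity
    have haep : ∀ᵐ p : ℝ × ℝ ∂((expMeasure (1/mx)).prod (expMeasure (1/my))),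
        0 ≤ (P1 * p.1 + P2 * p.2)⁻¹ := by
      filter_upwards [prod_expMeasure_ae_pos hx0 hy0] with p hp
      have : (0:ℝ) < P1 * p.1 + P2 * p.2 := by nlinarith [hp.1, hp.2]
      positivity
    rw [integral_eq_lintegral_of_nonneg_ae haep (Measurable.aestronglyMeasurable (by fun_prop))]
    rw [lintegral_inv_prod hmx hmy hP1 hP2 hne]
    exact ENNReal.toReal_ofReal (pf_value_nonneg hα hβ hne)
  -- put everything together
  have e0 : ∫ ω, (P1 * Z ω + P2 * W ω) * U ω / (P1 * X ω + P2 * Y ω) ∂μ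
      = ∫ ω, ((P1 * Z ω + P2 * W ω) * U ω) * (P1 * X ω + P2 * Y ω)⁻¹ ∂μ := by
    simp_rw [div_eq_mul_inv]
  rw [e0, (show
      ∫ ω, (P1 * Z ω + P2 * W ω) * U ω * (P1 * X ω + P2 * Y ω)⁻¹ ∂μ
        = (∫ ω, (P1 * Z ω + P2 * W ω) * U ω ∂μ) * ∫ ω, (P1 * X ω + P2 * Y ω)⁻¹ ∂μ from
      hAB.integral_mul_eq_mul_integral hnum.aestronglyMeasurable hden.aestronglyMeasurable),
    (show ∫ ω, (P1 * Z ω + P2 * W ω) * U ω ∂μ = (∫ ω, P1 * Z ω + P2 * W ω ∂μ) * ∫ ω, U ω ∂μ from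
      hVU.integral_mul_eq_mul_integral ((hZm.const_mul P1).add (hWm.const_mul P2)).aestronglyMeasurable
      hUm.aestronglyMeasurable)]
  rw [integral_add (hIZ.const_mul P1) (hIW.const_mul P2), MeasureTheory.integral_const_mul,
    MeasureTheory.integral_const_mul, hEZ, hEW, hEU, hEB]
  ring
end

section
/- Let p > 0 and let k ≥ 1 be an integer. Then ∫₀^∞ u^{2k−1}·exp(−p·u)/(u² + 1) du = (−1)^k·( ci(p)·cos(p) + si(p)·sin(p) ) + Σ_{j=1}^{k−1} (2k − 2j − 1)!·(−1)^{j−1}·p^{2j−2k}, where ci(p) = −∫_p^∞ (cos t)/t dt and si(p) = −∫_p^∞ (sin t)/t dt (the sum is empty for k = 1). -/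
open MeasureTheory Real Filter

lemma aux_intOn_pow_exp {p : ℝ} (hp : 0 < p) (n : ℕ) :
    IntegrableOn (fun u : ℝ => u ^ n * Real.exp (-p * u)) (Set.Ioi 0) := by
  apply integrable_of_isBigO_exp_neg (half_pos hp)
    ((continuous_pow n).mul (by continuity)).continuousOn
  apply Asymptotics.IsLittleO.isBigO
  rw [Asymptotics.isLittleO_iff_tendsto (fun x hx => absurd hx (Real.exp_ne_zero _))]
  have h1 : Tendsto (fun y : ℝ => y ^ n * Real.exp (-y)) atTop (nhds 0) :=
    tendsto_pow_mul_exp_neg_atTop_nhds_zero n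
  have h2 : Tendsto (fun x : ℝ => (p / 2) * x) atTop atTop :=
    Tendsto.const_mul_atTop (half_pos hp) tendsto_id
  have h3 := (h1.comp h2).const_mul (((p / 2) ^ n)⁻¹)
  rw [mul_zero] at h3
  apply h3.congr'
  filter_upwards [eventually_ge_atTop (0:ℝ)] with x hx
  have hpx : ((p/2) ^ n) ≠ 0 := by positivity
  simp only [Function.comp, Pi.mul_apply]
  rw [mul_div_assoc, ← Real.exp_sub, mul_pow]
  have : -p * x - -(p/2) * x = -(p/2*x) := by ring
  rw [this, ← mul_assoc, ← mul_assoc, inv_mul_cancel₀ hpx, one_mul]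

lemma aux_intOn_f {p : ℝ} (hp : 0 < p) (n : ℕ) :
    IntegrableOn (fun u : ℝ => u ^ n * Real.exp (-p * u) / (u ^ 2 + 1)) (Set.Ioi 0) := by
  apply Integrable.mono' (aux_intOn_pow_exp hp n)
  · exact (((continuous_pow n).mul (by continuity)).div
      (by continuity) (fun x => by positivity)).aestronglyMeasurable
  · filter_upwards [ae_restrict_mem measurableSet_Ioi] with u hu
    have hu0 : (0:ℝ) < u := hu
    have h1 : (0:ℝ) < u ^ 2 + 1 := by positivity
    rw [Real.norm_eq_abs, abs_div, abs_of_pos h1, abs_of_pos (by positivity)]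
    rw [div_le_iff₀ h1]
    nlinarith [mul_nonneg (mul_nonneg (pow_pos hu0 n).le (Real.exp_pos (-p*u)).le)
      (sq_nonneg u)]

lemma aux_integral_pow_exp {p : ℝ} (hp : 0 < p) (n : ℕ) :
    ∫ u in Set.Ioi (0:ℝ), u ^ n * Real.exp (-p * u) = n.factorial / p ^ (n + 1) := by
  have h := Real.integral_rpow_mul_exp_neg_mul_Ioi (a := (n:ℝ) + 1) (r := p)
    (by positivity) hp
  rw [Real.Gamma_nat_eq_factorial] at h
  have e1 : ∫ u in Set.Ioi (0:ℝ), u ^ n * Real.exp (-p * u)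
      = ∫ t in Set.Ioi (0:ℝ), t ^ ((n:ℝ)+1-1) * Real.exp (-(p*t)) := by
    apply setIntegral_congr_fun measurableSet_Ioi
    intro t ht
    simp [add_sub_cancel_right, Real.rpow_natCast, neg_mul]
  rw [e1, h, show ((n:ℝ)+1) = ((n+1:ℕ):ℝ) by push_cast; ring, Real.rpow_natCast,
    one_div, inv_pow, inv_mul_eq_div]

lemma aux_laplace_sin {p u : ℝ} (hp : 0 < p) (hu : 0 < u) :
    ∫ t in Set.Ioi p, Real.sin (t - p) * Real.exp (-t * u)
      = Real.exp (-p * u) / (u ^ 2 + 1) := by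
  have hu2 : (u:ℝ) ^ 2 + 1 ≠ 0 := by positivity
  set f : ℝ → ℝ := fun t =>
    -(Real.exp (-t * u) * (u * Real.sin (t - p) + Real.cos (t - p))) / (u ^ 2 + 1) with hf
  have hderiv : ∀ t ∈ Set.Ici p, HasDerivAt f (Real.sin (t - p) * Real.exp (-t * u)) t := by
    intro t _
    have h1 : HasDerivAt (fun t : ℝ => -t * u) (-u) t := by
      simpa using ((hasDerivAt_id t).neg.mul_const u)
    have h2 : HasDerivAt (fun t : ℝ => Real.exp (-t * u)) (Real.exp (-t * u) * -u) t :=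
      h1.exp
    have hs : HasDerivAt (fun t : ℝ => Real.sin (t - p)) (Real.cos (t - p)) t := by
      simpa using ((hasDerivAt_id t).sub_const p).sin
    have hc : HasDerivAt (fun t : ℝ => Real.cos (t - p)) (-Real.sin (t - p)) t := by
      simpa using ((hasDerivAt_id t).sub_const p).cos
    have := (((h2.mul ((hs.const_mul u).add hc)).neg).div_const (u ^ 2 + 1))
    refine this.congr_deriv ?_
    rw [div_eq_iff hu2]
    simp only [Pi.add_apply]
    ring
  have hint : IntegrableOn (fun t => Real.sin (t - p) * Real.exp (-t * u)) (Set.Ioi p) := by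
    apply Integrable.mono' ((exp_neg_integrableOn_Ioi p hu).congr_fun
      (fun t _ => by rw [neg_mul, mul_comm, neg_mul] : ∀ t ∈ Set.Ioi p,
        Real.exp (-u * t) = Real.exp (-t * u)) measurableSet_Ioi)
    · exact ((Real.continuous_sin.comp (continuous_id.sub continuous_const)).mul
        (by continuity)).aestronglyMeasurable
    · filter_upwards with t
      rw [Real.norm_eq_abs, abs_mul, abs_of_pos (Real.exp_pos _)]
      nlinarith [abs_sin_le_one (t - p), Real.exp_pos (-t * u), abs_nonneg (Real.sin (t-p))]
  have htend : Tendsto f atTop (nhds 0) := by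
    have hexp : Tendsto (fun t : ℝ => Real.exp (-t * u)) atTop (nhds 0) := by
      apply Real.tendsto_exp_atBot.comp
      have := (tendsto_mul_const_atBot_of_neg (by linarith : -u < 0)).2 (tendsto_id (α := ℝ))
      simpa [mul_comm, neg_mul, mul_neg] using this
    have hb : Tendsto (fun t : ℝ => Real.exp (-t * u) * ((u + 1) / (u ^ 2 + 1)))
        atTop (nhds 0) := by simpa using hexp.mul_const ((u + 1) / (u ^ 2 + 1))
    apply squeeze_zero_norm _ hb
    intro t
    rw [hf]
    rw [Real.norm_eq_abs, abs_div, abs_neg, abs_mul, abs_of_pos (Real.exp_pos _),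
      abs_of_pos (by positivity : (0:ℝ) < u ^ 2 + 1), mul_div_assoc]
    gcongr
    calc |u * Real.sin (t - p) + Real.cos (t - p)|
        ≤ |u * Real.sin (t - p)| + |Real.cos (t - p)| := abs_add_le _ _
      _ ≤ u + 1 := by
          rw [abs_mul, abs_of_pos hu]
          nlinarith [abs_sin_le_one (t - p), abs_cos_le_one (t - p), abs_nonneg (Real.sin (t-p))]
  have := integral_Ioi_of_hasDerivAt_of_tendsto' hderiv hint htend
  rw [this, hf]
  simp [Real.sin_zero, Real.cos_zero, neg_div]

lemma aux_laplace_id {t : ℝ} (ht : 0 < t) :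
    ∫ u in Set.Ioi (0:ℝ), u * Real.exp (-t * u) = (t ^ 2)⁻¹ := by
  have h := aux_integral_pow_exp ht 1
  simp only [pow_one, Nat.factorial_one, Nat.cast_one] at h
  rw [h, one_div]

lemma aux_fubini {p : ℝ} (hp : 0 < p) :
    ∫ t in Set.Ioi p, Real.sin (t - p) / t ^ 2
      = ∫ u in Set.Ioi (0:ℝ), u * Real.exp (-p * u) / (u ^ 2 + 1) := by
  set F : ℝ → ℝ → ℝ := fun t u => Real.sin (t - p) * (u * Real.exp (-t * u)) with hF
  have hmeas : AEStronglyMeasurable (Function.uncurry F)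
      ((volume.restrict (Set.Ioi p)).prod (volume.restrict (Set.Ioi (0:ℝ)))) := by
    apply Continuous.aestronglyMeasurable
    apply Continuous.mul
    · exact Real.continuous_sin.comp ((continuous_fst).sub continuous_const)
    · exact continuous_snd.mul ((continuous_fst.neg.mul continuous_snd).rexp)
  have hg : IntegrableOn (fun t : ℝ => (t ^ 2)⁻¹) (Set.Ioi p) := by
    have h := integrableOn_Ioi_rpow_of_lt (show (-2:ℝ) < -1 by norm_num) hp
    apply h.congr_fun ?_ measurableSet_Ioi
    intro t ht
    have ht0 : 0 < t := lt_trans hp ht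
    have : (t:ℝ) ^ (-2:ℝ) = (t ^ 2)⁻¹ := by
      rw [Real.rpow_neg ht0.le, show (2:ℝ) = ((2:ℕ):ℝ) by norm_num, Real.rpow_natCast]
    simpa using this
  have hInt : Integrable (Function.uncurry F)
      ((volume.restrict (Set.Ioi p)).prod (volume.restrict (Set.Ioi (0:ℝ)))) := by
    rw [integrable_prod_iff hmeas]
    constructor
    · rw [ae_restrict_iff' measurableSet_Ioi]
      apply ae_of_all
      intro t ht
      have ht0 : 0 < t := lt_trans hp ht
      have := (aux_intOn_pow_exp ht0 1).const_mul (Real.sin (t - p))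
      simpa [hF, pow_one] using this
    · have key : ∀ t ∈ Set.Ioi p,
          (∫ u in Set.Ioi (0:ℝ), ‖F t u‖) = |Real.sin (t - p)| / t ^ 2 := by
        intro t ht
        have ht0 : 0 < t := lt_trans hp ht
        have e1 : ∫ u in Set.Ioi (0:ℝ), ‖F t u‖
            = ∫ u in Set.Ioi (0:ℝ), |Real.sin (t - p)| * (u * Real.exp (-t * u)) := by
          refine setIntegral_congr_fun measurableSet_Ioi (fun u hu => ?_)
          have hu0 : (0:ℝ) < u := hu
          show ‖Real.sin (t - p) * (u * Real.exp (-t * u))‖ = _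
          rw [Real.norm_eq_abs, abs_mul, abs_mul, abs_of_pos hu0,
            abs_of_pos (Real.exp_pos _)]
        rw [e1, MeasureTheory.integral_const_mul, aux_laplace_id ht0, div_eq_mul_inv]
      have h2 : Integrable (fun t => |Real.sin (t - p)| / t ^ 2)
          (volume.restrict (Set.Ioi p)) := by
        apply Integrable.mono' hg
        · apply ContinuousOn.aestronglyMeasurable _ measurableSet_Ioi
          apply ContinuousOn.div
          · exact (Real.continuous_sin.comp (continuous_id.sub continuous_const)).abs.continuousOn
          · exact (continuous_pow 2).continuousOn
          · intro t ht
            have : 0 < t := lt_trans hp ht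
            positivity
        · rw [ae_restrict_iff' measurableSet_Ioi]
          apply ae_of_all
          intro t ht
          have ht0 : 0 < t := lt_trans hp ht
          rw [Real.norm_eq_abs, abs_div, abs_abs, abs_of_pos (by positivity : (0:ℝ) < t ^ 2),
            ← one_div]
          gcongr
          exact abs_sin_le_one _
      exact h2.congr (by
        rw [Filter.EventuallyEq, ae_restrict_iff' measurableSet_Ioi]
        exact ae_of_all _ fun t ht => (key t ht).symm)
  have hswap := MeasureTheory.integral_integral_swap hInt
  have hL : ∫ t in Set.Ioi p, ∫ u in Set.Ioi (0:ℝ), F t u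
      = ∫ t in Set.Ioi p, Real.sin (t - p) / t ^ 2 := by
    refine setIntegral_congr_fun measurableSet_Ioi (fun t ht => ?_)
    have ht0 : 0 < t := lt_trans hp ht
    show (∫ u in Set.Ioi (0:ℝ), Real.sin (t - p) * (u * Real.exp (-t * u))) = _
    rw [MeasureTheory.integral_const_mul, aux_laplace_id ht0, div_eq_mul_inv]
  have hR : ∫ u in Set.Ioi (0:ℝ), ∫ t in Set.Ioi p, F t u
      = ∫ u in Set.Ioi (0:ℝ), u * Real.exp (-p * u) / (u ^ 2 + 1) := by
    refine setIntegral_congr_fun measurableSet_Ioi (fun u hu => ?_)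
    have hu0 : (0:ℝ) < u := hu
    show (∫ t in Set.Ioi p, Real.sin (t - p) * (u * Real.exp (-t * u))) = _
    have e1 : ∫ t in Set.Ioi p, Real.sin (t - p) * (u * Real.exp (-t * u))
        = ∫ t in Set.Ioi p, u * (Real.sin (t - p) * Real.exp (-t * u)) := by
      refine setIntegral_congr_fun measurableSet_Ioi (fun t ht => ?_)
      ring
    rw [e1, MeasureTheory.integral_const_mul, aux_laplace_sin hp hu0, mul_div_assoc]
  rw [hL, hR] at hswap
  exact hswap

lemma aux_int_sin2 {p : ℝ} (hp : 0 < p) :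
    IntegrableOn (fun t => Real.sin (t - p) / t ^ 2) (Set.Ioi p) := by
  have hg : IntegrableOn (fun t : ℝ => (t ^ 2)⁻¹) (Set.Ioi p) := by
    have h := integrableOn_Ioi_rpow_of_lt (show (-2:ℝ) < -1 by norm_num) hp
    apply h.congr_fun ?_ measurableSet_Ioi
    intro t ht
    have ht0 : 0 < t := lt_trans hp ht
    have : (t:ℝ) ^ (-2:ℝ) = (t ^ 2)⁻¹ := by
      rw [Real.rpow_neg ht0.le, show (2:ℝ) = ((2:ℕ):ℝ) by norm_num, Real.rpow_natCast]
    simpa using this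
  apply Integrable.mono' hg
  · apply ContinuousOn.aestronglyMeasurable _ measurableSet_Ioi
    apply ContinuousOn.div
    · exact (Real.continuous_sin.comp (continuous_id.sub continuous_const)).continuousOn
    · exact (continuous_pow 2).continuousOn
    · intro t ht
      have : 0 < t := lt_trans hp ht
      positivity
  · rw [ae_restrict_iff' measurableSet_Ioi]
    apply ae_of_all
    intro t ht
    have ht0 : 0 < t := lt_trans hp ht
    rw [Real.norm_eq_abs, abs_div, abs_of_pos (by positivity : (0:ℝ) < t ^ 2), ← one_div]
    gcongr
    exact abs_sin_le_one _

lemma aux_base {p : ℝ} (hp : 0 < p) {ci si : ℝ}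
    (hci : Tendsto (fun b => ∫ t in p..b, Real.cos t / t) atTop (nhds (-ci)))
    (hsi : Tendsto (fun b => ∫ t in p..b, Real.sin t / t) atTop (nhds (-si))) :
    ∫ u in Set.Ioi (0:ℝ), u * Real.exp (-p * u) / (u ^ 2 + 1)
      = -(ci * Real.cos p + si * Real.sin p) := by
  have hItg : ∀ (f : ℝ → ℝ), Continuous f → ∀ b, p ≤ b →
      IntervalIntegrable (fun t => f t / t) volume p b := by
    intro f hf b hb
    apply ContinuousOn.intervalIntegrable
    apply ContinuousOn.div hf.continuousOn continuousOn_id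
    intro t ht
    rw [Set.uIcc_of_le hb] at ht
    exact ne_of_gt (lt_of_lt_of_le hp ht.1)
  have hItg2 : ∀ (f : ℝ → ℝ), Continuous f → ∀ b, p ≤ b →
      IntervalIntegrable (fun t => f t / t ^ 2) volume p b := by
    intro f hf b hb
    apply ContinuousOn.intervalIntegrable
    apply ContinuousOn.div hf.continuousOn (continuous_pow 2).continuousOn
    intro t ht
    rw [Set.uIcc_of_le hb] at ht
    have : 0 < t := lt_of_lt_of_le hp ht.1
    positivity
  have hcont_sin : Continuous fun t : ℝ => Real.sin (t - p) :=
    Real.continuous_sin.comp (continuous_id.sub continuous_const)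
  have hcont_cos : Continuous fun t : ℝ => Real.cos (t - p) :=
    Real.continuous_cos.comp (continuous_id.sub continuous_const)
  have h4 := intervalIntegral_tendsto_integral_Ioi p (aux_int_sin2 hp) tendsto_id
  have h3 : Tendsto (fun b => Real.sin (b - p) / b) atTop (nhds 0) := by
    refine squeeze_zero_norm' ?_ tendsto_inv_atTop_zero
    filter_upwards [eventually_gt_atTop (0:ℝ)] with b hb
    rw [Real.norm_eq_abs, abs_div, abs_of_pos hb, ← one_div]
    gcongr
    exact abs_sin_le_one _
  have h2 : ∀ᶠ b in atTop, ∫ t in p..b, Real.cos (t - p) / t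
      = Real.sin (b - p) / b + ∫ t in p..b, Real.sin (t - p) / t ^ 2 := by
    filter_upwards [eventually_ge_atTop p] with b hb
    have hd : ∀ t ∈ Set.uIcc p b, HasDerivAt (fun t => Real.sin (t - p) / t)
        (Real.cos (t - p) / t - Real.sin (t - p) / t ^ 2) t := by
      intro t ht
      rw [Set.uIcc_of_le hb] at ht
      have ht0 : 0 < t := lt_of_lt_of_le hp ht.1
      have hs : HasDerivAt (fun t : ℝ => Real.sin (t - p)) (Real.cos (t - p)) t := by
        simpa using ((hasDerivAt_id t).sub_const p).sin
      have := hs.div (hasDerivAt_id t) (ne_of_gt ht0)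
      refine this.congr_deriv ?_
      simp only [id, mul_one]
      rw [div_sub_div _ _ (ne_of_gt ht0) (pow_ne_zero 2 (ne_of_gt ht0)),
        div_eq_div_iff (pow_ne_zero 2 (ne_of_gt ht0))
          (mul_ne_zero (ne_of_gt ht0) (pow_ne_zero 2 (ne_of_gt ht0)))]
      ring
    have hA := hItg _ hcont_cos b hb
    have hB := hItg2 _ hcont_sin b hb
    have hftc := intervalIntegral.integral_eq_sub_of_hasDerivAt hd (hA.sub hB)
    rw [intervalIntegral.integral_sub hA hB, sub_self, Real.sin_zero, zero_div, sub_zero]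
      at hftc
    linarith [hftc]
  have hA := (hci.const_mul (Real.cos p)).add (hsi.const_mul (Real.sin p))
  rw [show Real.cos p * -ci + Real.sin p * -si
      = -(ci * Real.cos p + si * Real.sin p) by ring] at hA
  have heq : ∀ᶠ b in atTop, Real.cos p * (∫ t in p..b, Real.cos t / t)
      + Real.sin p * (∫ t in p..b, Real.sin t / t)
      = ∫ t in p..b, Real.cos (t - p) / t := by
    filter_upwards [eventually_ge_atTop p] with b hb
    rw [← intervalIntegral.integral_const_mul, ← intervalIntegral.integral_const_mul,
      ← intervalIntegral.integral_add ((hItg _ Real.continuous_cos b hb).const_mul _)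
        ((hItg _ Real.continuous_sin b hb).const_mul _)]
    apply intervalIntegral.integral_congr
    intro t _
    beta_reduce
    rw [Real.cos_sub]
    ring
  have h1 := hA.congr' heq
  have h6 := (h3.add h4).congr' (h2.mono fun b hb => hb.symm)
  have h7 := tendsto_nhds_unique h1 h6
  rw [← aux_fubini hp]
  rw [h7, zero_add]

lemma aux_rec {p : ℝ} (hp : 0 < p) {k : ℕ} (hk : 1 ≤ k) :
    ∫ u in Set.Ioi (0:ℝ), u ^ (2 * (k + 1) - 1) * Real.exp (-p * u) / (u ^ 2 + 1)
      = (Nat.factorial (2 * k - 1)) / p ^ (2 * k)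
        - ∫ u in Set.Ioi (0:ℝ), u ^ (2 * k - 1) * Real.exp (-p * u) / (u ^ 2 + 1) := by
  have e : ∀ u ∈ Set.Ioi (0:ℝ), u ^ (2 * (k + 1) - 1) * Real.exp (-p * u) / (u ^ 2 + 1)
      = u ^ (2 * k - 1) * Real.exp (-p * u)
        - u ^ (2 * k - 1) * Real.exp (-p * u) / (u ^ 2 + 1) := by
    intro u hu
    have hu2 : (u:ℝ) ^ 2 + 1 ≠ 0 := by positivity
    have hpow : u ^ (2 * (k + 1) - 1) = u ^ (2 * k - 1) * u ^ 2 := by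
      rw [← pow_add]; congr 1; omega
    field_simp
    rw [hpow]; ring
  rw [setIntegral_congr_fun measurableSet_Ioi e,
    integral_sub (aux_intOn_pow_exp hp _) (aux_intOn_f hp _),
    aux_integral_pow_exp hp (2 * k - 1), show 2 * k - 1 + 1 = 2 * k by omega]

lemma aux_shift (f : ℕ → ℝ) (m : ℕ) :
    ∑ j ∈ Finset.Icc 1 (m + 1), f j = (∑ j ∈ Finset.Icc 1 m, f (j + 1)) + f 1 := by
  rw [← Finset.Ico_add_one_right_eq_Icc, ← Finset.Ico_add_one_right_eq_Icc, Finset.sum_Ico_eq_sum_range,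
    Finset.sum_Ico_eq_sum_range]
  rw [show m + 1 + 1 - 1 = m + 1 by omega, show m + 1 - 1 = m by omega,
    Finset.sum_range_succ']
  congr 1

/-- Closed form for `∫₀^∞ u^{2k-1}·exp(-p·u)/(u²+1) du` in terms of the cosine and sine
integrals `ci(p) = -∫_p^∞ (cos t)/t dt` and `si(p) = -∫_p^∞ (sin t)/t dt` (given as limits
of proper integrals since these improper integrals converge only conditionally):
`∫₀^∞ u^{2k-1}·exp(-p·u)/(u²+1) du
  = (-1)^k·(ci(p)·cos p + si(p)·sin p) + ∑_{j=1}^{k-1} (2k-2j-1)!·(-1)^{j-1}·p^{2j-2k}`. -/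
theorem integral_odd_power_exp_div_sq_add_one
    (p : ℝ) (hp : 0 < p) (k : ℕ) (hk : 1 ≤ k) (ci si : ℝ)
    (hci : Tendsto (fun b => ∫ t in p..b, Real.cos t / t) atTop (nhds (-ci)))
    (hsi : Tendsto (fun b => ∫ t in p..b, Real.sin t / t) atTop (nhds (-si))) :
    ∫ u in Set.Ioi (0 : ℝ), u ^ (2 * k - 1) * Real.exp (-p * u) / (u ^ 2 + 1)
      = (-1 : ℝ) ^ k * (ci * Real.cos p + si * Real.sin p)
        + ∑ j ∈ Finset.Icc 1 (k - 1),
            (Nat.factorial (2 * k - 2 * j - 1) : ℝ) * (-1 : ℝ) ^ (j - 1)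
              * p ^ (2 * (j : ℤ) - 2 * (k : ℤ)) := by
  induction k, hk using Nat.le_induction with
  | base =>
    have h := aux_base hp hci hsi
    rw [show (1:ℕ) - 1 = 0 from rfl, Finset.Icc_eq_empty (by omega), Finset.sum_empty,
      add_zero, pow_one]
    rw [show 2 * 1 - 1 = 1 from rfl]
    simp only [pow_one]
    rw [h]
    ring
  | succ k hk ih =>
    obtain ⟨m, rfl⟩ : ∃ m, k = m + 1 := ⟨k - 1, by omega⟩
    rw [aux_rec hp (by omega : 1 ≤ m + 1), ih]
    simp only [Nat.add_sub_cancel]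
    rw [aux_shift (fun j => (Nat.factorial (2 * (m + 1 + 1) - 2 * j - 1) : ℝ)
      * (-1 : ℝ) ^ (j - 1) * p ^ (2 * (j : ℤ) - 2 * ((m + 1 + 1 : ℕ) : ℤ))) m]
    have hterm : ∀ j ∈ Finset.Icc 1 m,
        (Nat.factorial (2 * (m + 1 + 1) - 2 * (j + 1) - 1) : ℝ)
          * (-1 : ℝ) ^ (j + 1 - 1) * p ^ (2 * ((j + 1 : ℕ) : ℤ) - 2 * ((m + 1 + 1 : ℕ) : ℤ))
        = -((Nat.factorial (2 * (m + 1) - 2 * j - 1) : ℝ)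
          * (-1 : ℝ) ^ (j - 1) * p ^ (2 * (j : ℤ) - 2 * ((m + 1 : ℕ) : ℤ))) := by
      intro j hj
      obtain ⟨i, rfl⟩ : ∃ i, j = i + 1 := ⟨j - 1, by have := (Finset.mem_Icc.mp hj).1; omega⟩
      rw [show 2 * (m + 1 + 1) - 2 * (i + 1 + 1) - 1 = 2 * (m + 1) - 2 * (i + 1) - 1
        by omega]
      rw [show (2 * ((i + 1 + 1 : ℕ) : ℤ) - 2 * ((m + 1 + 1 : ℕ) : ℤ))
        = 2 * ((i + 1 : ℕ) : ℤ) - 2 * ((m + 1 : ℕ) : ℤ) by push_cast; ring]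
      simp only [Nat.add_sub_cancel]
      rw [pow_succ]
      ring
    rw [Finset.sum_congr rfl hterm, Finset.sum_neg_distrib]
    have hf1 : ((2 : ℤ) * ((1 : ℕ) : ℤ) - 2 * ((m + 1 + 1 : ℕ) : ℤ))
        = -((2 * (m + 1) : ℕ) : ℤ) := by push_cast; ring
    rw [hf1, zpow_neg, zpow_natCast]
    rw [show 2 * (m + 1 + 1) - 2 * 1 - 1 = 2 * (m + 1) - 1 by omega]
    ring
end
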